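/- arXiv:2306.10601 — 6 statements merged into one kernel-verified Lean document; each statement's English description precedes it below -/
import Mathlib

section
/- Central Slicing Theorem: Let p ≥ 1 and let f : ℝ^p → ℂ be integrable. Let θ ∈ ℝ^p be a unit vector and {θ, e₁, …, e_{p−1}} an orthonormal basis of ℝ^p extending θ. Then for every r ∈ ℝ, the one-dimensional Fourier transform of the Radon slice equals the p-dimensional Fourier transform of f evaluated at rθ: ∫_ℝ R(f)(θ, u) e^{−iur} du = ∫_{ℝ^p} f(z) e^{−i⟨z, rθ⟩} dz. -/
open MeasureTheory
open scoped RealInnerProductSpace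

/-- The Radon transform of a complex-valued integrable function `f : ℝ^p → ℂ`
along the direction `θ`, using the orthonormal family `e` completing `θ` to a basis:
`R(f)(θ, u) = ∫_{ℝ^{p-1}} f (u θ + Σ_j s_j e_j) ds`. -/
noncomputable def radonC (p : ℕ) (f : EuclideanSpace ℝ (Fin p) → ℂ)
    (θ : EuclideanSpace ℝ (Fin p)) (e : Fin (p - 1) → EuclideanSpace ℝ (Fin p)) (u : ℝ) : ℂ :=
  ∫ s : EuclideanSpace ℝ (Fin (p - 1)), f (u • θ + ∑ j, s j • e j)

/-- Central Slicing Theorem: the one-dimensional Fourier transform of the Radon slice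
`R(f)(θ, ·)` at `r` equals the `p`-dimensional Fourier transform of `f` at `r • θ`. -/
theorem central_slicing_theorem (p : ℕ) (hp : 1 ≤ p)
    (f : EuclideanSpace ℝ (Fin p) → ℂ) (hf : Integrable f)
    (θ : EuclideanSpace ℝ (Fin p)) (hθ : ‖θ‖ = 1)
    (e : Fin (p - 1) → EuclideanSpace ℝ (Fin p))
    (horth : Orthonormal ℝ (Sum.elim (fun _ : Unit => θ) e))
    (hspan : Submodule.span ℝ (Set.range (Sum.elim (fun _ : Unit => θ) e)) = ⊤)
    (r : ℝ) :
    ∫ u : ℝ, radonC p f θ e u * Complex.exp (-(Complex.I * u * r)) =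
      ∫ z : EuclideanSpace ℝ (Fin p),
        f z * Complex.exp (-(Complex.I * (⟪z, r • θ⟫ : ℝ))) := by
  classical
  set F : EuclideanSpace ℝ (Fin p) → ℂ :=
    fun z => f z * Complex.exp (-(Complex.I * (⟪z, r • θ⟫ : ℝ))) with hFdef
  set b : OrthonormalBasis (Unit ⊕ Fin (p - 1)) ℝ (EuclideanSpace ℝ (Fin p)) :=
    OrthonormalBasis.mk horth hspan.ge with hbdef
  have hbθ : b (Sum.inl ()) = θ := by rw [hbdef, OrthonormalBasis.coe_mk]; rfl
  have hbe : ∀ j, b (Sum.inr j) = e j := fun j => by rw [hbdef, OrthonormalBasis.coe_mk]; rfl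
  set Φ : (ℝ × EuclideanSpace ℝ (Fin (p - 1))) ≃ᵐ EuclideanSpace ℝ (Fin p) :=
    (((MeasurableEquiv.funUnique Unit ℝ).symm.prodCongr
        (MeasurableEquiv.toLp 2 (Fin (p - 1) → ℝ)).symm).trans
      (((MeasurableEquiv.sumPiEquivProdPi fun _ : Unit ⊕ Fin (p - 1) => ℝ).symm).trans
        (((MeasurableEquiv.toLp 2 (Unit ⊕ Fin (p - 1) → ℝ)).symm.symm).trans
          b.repr.symm.toHomeomorph.toMeasurableEquiv))) with hΦdef
  have hΦ : MeasurePreserving Φ volume volume := by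
    rw [Measure.volume_eq_prod]
    exact (b.measurePreserving_repr_symm.comp
      (((EuclideanSpace.volume_preserving_symm_measurableEquiv_toLp _).symm _).comp
        ((volume_measurePreserving_sumPiEquivProdPi_symm _).comp
          (((volume_preserving_funUnique Unit ℝ).symm _).prod
            (EuclideanSpace.volume_preserving_symm_measurableEquiv_toLp _)))))
  have hΦapp : ∀ (u : ℝ) (s : EuclideanSpace ℝ (Fin (p - 1))),
      Φ (u, s) = u • θ + ∑ j, s j • e j := by
    intro u s
    show b.repr.symm _ = _
    rw [← b.sum_repr_symm, Fintype.sum_sum_type]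
    simp [hbθ, hbe, MeasurableEquiv.coe_toLp, MeasurableEquiv.coe_toLp_symm,
      MeasurableEquiv.prodCongr, MeasurableEquiv.funUnique, Equiv.funUnique,
      MeasurableEquiv.sumPiEquivProdPi, Equiv.sumPiEquivProdPi, uniqueElim]
  have hinner : ∀ (u : ℝ) (s : EuclideanSpace ℝ (Fin (p - 1))),
      (⟪(u • θ + ∑ j, s j • e j : EuclideanSpace ℝ (Fin p)), r • θ⟫ : ℝ) = u * r := by
    intro u s
    have hee : ∀ j, (⟪e j, θ⟫ : ℝ) = 0 := by
      intro j
      have := horth.2 (show (Sum.inr j : Unit ⊕ Fin (p - 1)) ≠ Sum.inl () by simp)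
      simpa using this
    have hθθ : (⟪θ, θ⟫ : ℝ) = 1 := by
      rw [real_inner_self_eq_norm_mul_norm, hθ]; norm_num
    rw [real_inner_smul_right, inner_add_left, real_inner_smul_left, sum_inner]
    simp only [real_inner_smul_left, hee, hθθ, mul_zero, Finset.sum_const_zero]
    ring
  have hFint : Integrable F := by
    have hb : Integrable fun z : EuclideanSpace ℝ (Fin p) =>
        Complex.exp (-(Complex.I * (⟪z, r • θ⟫ : ℝ))) * f z := by
      refine hf.bdd_mul (c := 1)
        (f := fun z => Complex.exp (-(Complex.I * (⟪z, r • θ⟫ : ℝ)))) ?_ ?_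
      · refine Continuous.aestronglyMeasurable ?_
        exact Complex.continuous_exp.comp
          ((continuous_const.mul (Complex.continuous_ofReal.comp
            (continuous_id.inner continuous_const))).neg)
      · filter_upwards with z
        simp [Complex.norm_exp]
    exact hb.congr (Filter.Eventually.of_forall fun z => mul_comm _ _)
  have hcomp : Integrable (fun q : ℝ × EuclideanSpace ℝ (Fin (p - 1)) => F (Φ q)) :=
    (hΦ.integrable_comp_emb Φ.measurableEmbedding).mpr hFint
  have key : ∀ u : ℝ, (∫ s : EuclideanSpace ℝ (Fin (p - 1)), F (Φ (u, s))) =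
      radonC p f θ e u * Complex.exp (-(Complex.I * u * r)) := by
    intro u
    rw [radonC, ← integral_mul_const]
    refine integral_congr_ae (Filter.Eventually.of_forall fun s => ?_)
    show F (Φ (u, s)) = _
    rw [hΦapp u s, hFdef]
    simp only
    rw [hinner u s]
    congr 2
    push_cast
    ring
  calc ∫ u : ℝ, radonC p f θ e u * Complex.exp (-(Complex.I * u * r))
      = ∫ u : ℝ, ∫ s : EuclideanSpace ℝ (Fin (p - 1)), F (Φ (u, s)) := by
        exact integral_congr_ae (Filter.Eventually.of_forall fun u => (key u).symm)
    _ = ∫ q : ℝ × EuclideanSpace ℝ (Fin (p - 1)), F (Φ q) := by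
        rw [Measure.volume_eq_prod] at hcomp ⊢
        exact (integral_prod _ hcomp).symm
    _ = ∫ z, F z := hΦ.integral_comp' F
end

section
/- Lipschitz bound for the regularized (frequency-truncated) back-projection (error term Δ_{τ,2} of Theorem 1): Let p ≥ 1 and C₀ > 0. Let λ₁, λ₂ : S^{p−1} × ℝ → ℝ be measurable, square-integrable with respect to the product of the surface measure σ on S^{p−1} and Lebesgue measure on ℝ, with λ_i(θ, u) = 0 whenever |u| > C₀. For i = 1, 2 define λ̂_i(θ, r) = ∫_ℝ λ_i(θ, u) e^{−iur} du and the truncated back-projection Ř_τ(λ_i)(z) = (1 / (2(2π)^p)) ∫_{S^{p−1}} ∫_{|r| ≤ τ} λ̂_i(θ, r) e^{i r ⟨θ, z⟩} |r|^{p−1} dr dσ(θ). Then for every τ > 0 and every z ∈ ℝ^p, |Ř_τ(λ₁)(z) − Ř_τ(λ₂)(z)| ≤ ((2C₀ σ(S^{p−1}))^{1/2} / (2π)^p) · τ^p · ( ∫_{S^{p−1}} ∫_ℝ (λ₁(θ, u) − λ₂(θ, u))² du dσ(θ) )^{1/2}. -/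
open MeasureTheory
open scoped RealInnerProductSpace

/-- The surface measure on the unit sphere `S^{p-1} ⊂ ℝ^p`. -/
noncomputable def sphereMeasure (p : ℕ) :
    Measure (Metric.sphere (0 : EuclideanSpace ℝ (Fin p)) 1) :=
  (volume : Measure (EuclideanSpace ℝ (Fin p))).toSphere

/-- The one-dimensional Fourier transform of the slice `λ(θ, ·)` at frequency `r`:
`λ̂(θ, r) = ∫ λ(θ, u) e^{-iur} du`. -/
noncomputable def ftSlice (p : ℕ)
    (lam : Metric.sphere (0 : EuclideanSpace ℝ (Fin p)) 1 → ℝ → ℝ)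
    (θ : Metric.sphere (0 : EuclideanSpace ℝ (Fin p)) 1) (r : ℝ) : ℂ :=
  ∫ u : ℝ, (lam θ u : ℂ) * Complex.exp (-(Complex.I * (u : ℂ) * (r : ℂ)))

/-- The frequency-truncated (regularized) filtered back-projection at cut-off level `τ`. -/
noncomputable def truncBackProj (p : ℕ)
    (lam : Metric.sphere (0 : EuclideanSpace ℝ (Fin p)) 1 → ℝ → ℝ)
    (τ : ℝ) (z : EuclideanSpace ℝ (Fin p)) : ℂ :=
  (1 / (2 * (2 * Real.pi) ^ p) : ℂ) *
    ∫ θ : Metric.sphere (0 : EuclideanSpace ℝ (Fin p)) 1,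
      (∫ r in {r : ℝ | |r| ≤ τ},
        ftSlice p lam θ r *
          Complex.exp (Complex.I * (r : ℂ) *
            ((⟪(θ : EuclideanSpace ℝ (Fin p)), z⟫ : ℝ) : ℂ)) *
          ((|r| ^ (p - 1) : ℝ) : ℂ))
      ∂(sphereMeasure p)

private lemma sqrt_le_one_add (x : ℝ) (hx : 0 ≤ x) : Real.sqrt x ≤ 1 + x := by
  nlinarith [Real.sq_sqrt hx, Real.sqrt_nonneg x, sq_nonneg (Real.sqrt x - 1)]

private lemma norm_cexp_of_re_eq_zero (z : ℂ) (hz : z.re = 0) : ‖Complex.exp z‖ = 1 := by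
  rw [Complex.norm_exp, hz, Real.exp_zero]

private lemma cs_integral {α : Type*} [MeasurableSpace α] (μ : Measure α) [IsFiniteMeasure μ]
    {f : α → ℝ} (hf : AEStronglyMeasurable f μ) (hnn : 0 ≤ᵐ[μ] f)
    (hf2 : Integrable (fun x => f x ^ 2) μ) :
    ∫ x, f x ∂μ ≤ Real.sqrt (μ Set.univ).toReal * Real.sqrt (∫ x, f x ^ 2 ∂μ) := by
  have hmem : MemLp f 2 μ := (memLp_two_iff_integrable_sq hf).mpr hf2
  have h2 : (ENNReal.ofReal 2) = 2 := by norm_num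
  have hpq : Real.HolderConjugate 2 2 := Real.HolderConjugate.two_two
  have h := integral_mul_le_Lp_mul_Lq_of_nonneg (μ := μ) hpq
      (Filter.Eventually.of_forall fun _ => (zero_le_one : (0:ℝ) ≤ 1)) hnn
      (g := f) (f := fun _ => (1:ℝ)) (by rw [h2]; exact memLp_const 1) (by rw [h2]; exact hmem)
  have hrw : ∀ x : ℝ, x ^ (2:ℝ) = x ^ 2 := fun x => by
    rw [show (2:ℝ) = ((2:ℕ):ℝ) by norm_num, Real.rpow_natCast]
  simp only [one_mul, hrw, one_pow] at h
  calc ∫ x, f x ∂μ ≤ (∫ _, (1:ℝ) ∂μ) ^ (1/(2:ℝ)) * (∫ x, f x ^ 2 ∂μ) ^ (1/(2:ℝ)) := h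
    _ = Real.sqrt (μ Set.univ).toReal * Real.sqrt (∫ x, f x ^ 2 ∂μ) := by
        rw [← Real.sqrt_eq_rpow, ← Real.sqrt_eq_rpow, integral_const, smul_eq_mul, mul_one, measureReal_def]

private lemma norm_ftSlice_integrand (lam : ℝ → ℝ) (r : ℝ) (u : ℝ) :
    ‖(lam u : ℂ) * Complex.exp (-(Complex.I * (u : ℂ) * (r : ℂ)))‖ = |lam u| := by
  rw [norm_mul, norm_cexp_of_re_eq_zero _ (by simp), mul_one, Complex.norm_real,
    Real.norm_eq_abs]

private lemma ftSlice_norm_le (p : ℕ)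
    (lam : Metric.sphere (0 : EuclideanSpace ℝ (Fin p)) 1 → ℝ → ℝ)
    (θ : Metric.sphere (0 : EuclideanSpace ℝ (Fin p)) 1) (r : ℝ) :
    ‖ftSlice p lam θ r‖ ≤ ∫ u : ℝ, |lam θ u| := by
  refine (norm_integral_le_integral_norm _).trans_eq ?_
  exact integral_congr_ae (Filter.Eventually.of_forall fun u => norm_ftSlice_integrand _ r u)

private lemma ft_integrand_integrable (lam : ℝ → ℝ) (hsec : Measurable lam)
    (hA : Integrable (fun u => |lam u|) volume) (r : ℝ) :
    Integrable (fun u : ℝ => (lam u : ℂ) * Complex.exp (-(Complex.I * (u : ℂ) * (r : ℂ))))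
      volume := by
  refine hA.mono' ?_ (Filter.Eventually.of_forall fun u =>
    (norm_ftSlice_integrand lam r u).le)
  exact ((Complex.measurable_ofReal.comp hsec).mul
    ((((measurable_const.mul Complex.measurable_ofReal).mul
      measurable_const).neg).cexp)).aestronglyMeasurable

private lemma norm_G_eq (p : ℕ)
    (lam : Metric.sphere (0 : EuclideanSpace ℝ (Fin p)) 1 → ℝ → ℝ)
    (θ : Metric.sphere (0 : EuclideanSpace ℝ (Fin p)) 1) (r : ℝ) (c : ℝ) :
    ‖ftSlice p lam θ r * Complex.exp (Complex.I * (r : ℂ) * (c : ℂ)) *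
        ((|r| ^ (p - 1) : ℝ) : ℂ)‖ = ‖ftSlice p lam θ r‖ * |r| ^ (p - 1) := by
  rw [norm_mul, norm_mul, norm_cexp_of_re_eq_zero _ (by simp), mul_one, Complex.norm_real,
    Real.norm_eq_abs, abs_of_nonneg (pow_nonneg (abs_nonneg r) _)]

private lemma aux (p : ℕ) (hp : 1 ≤ p) (C₀ : ℝ) (hC₀ : 0 < C₀) (τ : ℝ) (hτ : 0 < τ)
    (z : EuclideanSpace ℝ (Fin p))
    (lam : Metric.sphere (0 : EuclideanSpace ℝ (Fin p)) 1 → ℝ → ℝ)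
    (hmeas : Measurable (fun q : Metric.sphere (0 : EuclideanSpace ℝ (Fin p)) 1 × ℝ =>
      lam q.1 q.2))
    (hL : MemLp (fun q : Metric.sphere (0 : EuclideanSpace ℝ (Fin p)) 1 × ℝ =>
      lam q.1 q.2) 2 ((sphereMeasure p).prod volume))
    (hsupp : ∀ θ (u : ℝ), C₀ < |u| → lam θ u = 0) :
    (∀ᵐ θ ∂sphereMeasure p, Integrable (fun u => |lam θ u|) volume)
    ∧ (∀ᵐ θ ∂sphereMeasure p,
        ‖∫ r in {r : ℝ | |r| ≤ τ}, ftSlice p lam θ r *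
            Complex.exp (Complex.I * (r:ℂ) *
              ((⟪(θ : EuclideanSpace ℝ (Fin p)), z⟫ : ℝ) : ℂ)) *
            ((|r| ^ (p-1) : ℝ) : ℂ)‖
          ≤ 2 * τ ^ p * (Real.sqrt (2 * C₀) * Real.sqrt (∫ u : ℝ, lam θ u ^ 2)))
    ∧ Integrable (fun θ => ∫ r in {r : ℝ | |r| ≤ τ}, ftSlice p lam θ r *
            Complex.exp (Complex.I * (r:ℂ) *
              ((⟪(θ : EuclideanSpace ℝ (Fin p)), z⟫ : ℝ) : ℂ)) *
            ((|r| ^ (p-1) : ℝ) : ℂ)) (sphereMeasure p)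
    ∧ (∀ᵐ θ ∂sphereMeasure p, IntegrableOn (fun r => ftSlice p lam θ r *
            Complex.exp (Complex.I * (r:ℂ) *
              ((⟪(θ : EuclideanSpace ℝ (Fin p)), z⟫ : ℝ) : ℂ)) *
            ((|r| ^ (p-1) : ℝ) : ℂ)) {r : ℝ | |r| ≤ τ} volume)
    ∧ Integrable (fun θ => Real.sqrt (∫ u : ℝ, lam θ u ^ 2)) (sphereMeasure p) := by
  haveI : IsFiniteMeasure (sphereMeasure p) := by unfold sphereMeasure; infer_instance
  have hsetIcc : {r : ℝ | |r| ≤ τ} = Set.Icc (-τ) τ := by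
    ext r; simp [abs_le]
  have hvolIcc : volume (Set.Icc (-τ) τ) < ⊤ := by
    rw [Real.volume_Icc]; exact ENNReal.ofReal_lt_top
  have hsec : ∀ θ, Measurable (lam θ) := fun θ => hmeas.comp measurable_prodMk_left
  have hsuppIcc : ∀ θ (u : ℝ), u ∉ Set.Icc (-C₀) C₀ → lam θ u = 0 := fun θ u hu =>
    hsupp θ u (lt_of_not_ge fun h => hu (Set.mem_Icc.mpr (abs_le.mp h)))
  have hsq : Integrable
      (fun q : Metric.sphere (0 : EuclideanSpace ℝ (Fin p)) 1 × ℝ => lam q.1 q.2 ^ 2)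
      ((sphereMeasure p).prod volume) := hL.integrable_sq
  have hae2 : ∀ᵐ θ ∂sphereMeasure p, Integrable (fun u => lam θ u ^ 2) volume :=
    hsq.prod_right_ae
  -- A : integrability of |lam θ ·|
  have hA : ∀ᵐ θ ∂sphereMeasure p, Integrable (fun u => |lam θ u|) volume := by
    filter_upwards [hae2] with θ h2
    have hind : Integrable (Set.indicator (Set.Icc (-C₀) C₀) (fun u => 1 + lam θ u ^ 2))
        volume := by
      refine IntegrableOn.integrable_indicator ?_ measurableSet_Icc
      exact ((integrableOn_const (by
        rw [Real.volume_Icc]; exact ENNReal.ofReal_ne_top)).add h2.integrableOn)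
    refine hind.mono' ((hsec θ).abs.aestronglyMeasurable)
      (Filter.Eventually.of_forall fun u => ?_)
    by_cases hu : u ∈ Set.Icc (-C₀) C₀
    · rw [Set.indicator_of_mem hu, Real.norm_eq_abs, abs_abs]
      nlinarith [sq_abs (lam θ u), sq_nonneg (|lam θ u| - 1), abs_nonneg (lam θ u)]
    · rw [Set.indicator_of_notMem hu, hsuppIcc θ u hu]; simp
  -- Cauchy-Schwarz on the slice
  have hCS : ∀ᵐ θ ∂sphereMeasure p,
      ∫ u : ℝ, |lam θ u| ≤ Real.sqrt (2 * C₀) * Real.sqrt (∫ u : ℝ, lam θ u ^ 2) := by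
    filter_upwards [hae2] with θ h2
    haveI : IsFiniteMeasure (volume.restrict (Set.Icc (-C₀) C₀)) :=
      ⟨by rw [Measure.restrict_apply_univ, Real.volume_Icc]; exact ENNReal.ofReal_lt_top⟩
    have heq : ∫ u : ℝ, |lam θ u| = ∫ u in Set.Icc (-C₀) C₀, |lam θ u| :=
      (setIntegral_eq_integral_of_forall_compl_eq_zero fun u hu => by
        rw [hsuppIcc θ u hu, abs_zero]).symm
    have hsq' : Integrable (fun u => |lam θ u| ^ 2) (volume.restrict (Set.Icc (-C₀) C₀)) := by
      have : (fun u => |lam θ u| ^ 2) = fun u => lam θ u ^ 2 := funext fun u => sq_abs _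
      rw [this]; exact h2.restrict
    have hcs := cs_integral (volume.restrict (Set.Icc (-C₀) C₀))
      ((hsec θ).abs.aestronglyMeasurable.restrict)
      (Filter.Eventually.of_forall fun u => abs_nonneg _) hsq'
    have hmeq : ((volume.restrict (Set.Icc (-C₀) C₀)) Set.univ).toReal = 2 * C₀ := by
      rw [Measure.restrict_apply_univ, Real.volume_Icc, ENNReal.toReal_ofReal (by linarith)]
      ring
    have hle2 : ∫ u in Set.Icc (-C₀) C₀, |lam θ u| ^ 2 ≤ ∫ u : ℝ, lam θ u ^ 2 := by
      have : (fun u => |lam θ u| ^ 2) = fun u => lam θ u ^ 2 := funext fun u => sq_abs _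
      rw [this]
      exact setIntegral_le_integral h2 (Filter.Eventually.of_forall fun u => sq_nonneg _)
    calc ∫ u : ℝ, |lam θ u| = ∫ u in Set.Icc (-C₀) C₀, |lam θ u| := heq
      _ ≤ Real.sqrt (2 * C₀) * Real.sqrt (∫ u in Set.Icc (-C₀) C₀, |lam θ u| ^ 2) := by
          rw [← hmeq]; exact hcs
      _ ≤ Real.sqrt (2 * C₀) * Real.sqrt (∫ u : ℝ, lam θ u ^ 2) :=
          mul_le_mul_of_nonneg_left (Real.sqrt_le_sqrt hle2) (Real.sqrt_nonneg _)
  -- B : pointwise bound on the inner r-integral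
  have hB : ∀ᵐ θ ∂sphereMeasure p,
      ‖∫ r in {r : ℝ | |r| ≤ τ}, ftSlice p lam θ r *
          Complex.exp (Complex.I * (r:ℂ) *
            ((⟪(θ : EuclideanSpace ℝ (Fin p)), z⟫ : ℝ) : ℂ)) *
          ((|r| ^ (p-1) : ℝ) : ℂ)‖
        ≤ 2 * τ ^ p * (Real.sqrt (2 * C₀) * Real.sqrt (∫ u : ℝ, lam θ u ^ 2)) := by
    filter_upwards [hCS] with θ hcs
    rw [hsetIcc]
    have hbd : ∀ r ∈ Set.Icc (-τ) τ,
        ‖ftSlice p lam θ r * Complex.exp (Complex.I * (r:ℂ) *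
            ((⟪(θ : EuclideanSpace ℝ (Fin p)), z⟫ : ℝ) : ℂ)) * ((|r| ^ (p-1) : ℝ) : ℂ)‖
          ≤ Real.sqrt (2 * C₀) * Real.sqrt (∫ u : ℝ, lam θ u ^ 2) * τ ^ (p-1) := by
      intro r hr
      rw [norm_G_eq]
      have h1 : ‖ftSlice p lam θ r‖ ≤ Real.sqrt (2 * C₀) * Real.sqrt (∫ u : ℝ, lam θ u ^ 2) :=
        (ftSlice_norm_le p lam θ r).trans hcs
      have h2 : |r| ^ (p-1) ≤ τ ^ (p-1) :=
        pow_le_pow_left₀ (abs_nonneg r) (abs_le.mpr ⟨hr.1, hr.2⟩) _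
      exact mul_le_mul h1 h2 (pow_nonneg (abs_nonneg r) _) (by positivity)
    refine (norm_setIntegral_le_of_norm_le_const hvolIcc hbd).trans ?_
    rw [measureReal_def, Real.volume_Icc, ENNReal.toReal_ofReal (by linarith)]
    refine le_of_eq ?_
    have hτp : τ ^ (p-1) * (τ - -τ) = 2 * τ ^ p := by
      rw [show τ - -τ = 2 * τ by ring, show τ ^ (p-1) * (2*τ) = 2 * (τ^(p-1) * τ) by ring,
        ← pow_succ, Nat.sub_add_cancel hp]
    linear_combination (Real.sqrt (2*C₀) * Real.sqrt (∫ u : ℝ, lam θ u ^ 2)) * hτp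
  -- strong measurability of the inner r-integral as a function of θ
  have hGSM : StronglyMeasurable
      (fun q : Metric.sphere (0 : EuclideanSpace ℝ (Fin p)) 1 × ℝ =>
        ftSlice p lam q.1 q.2 *
          Complex.exp (Complex.I * (q.2:ℂ) *
            ((⟪(q.1 : EuclideanSpace ℝ (Fin p)), z⟫ : ℝ) : ℂ)) *
          ((|q.2| ^ (p-1) : ℝ) : ℂ)) := by
    have hH : Measurable
        (fun q : (Metric.sphere (0 : EuclideanSpace ℝ (Fin p)) 1 × ℝ) × ℝ =>
          (lam q.1.1 q.2 : ℂ) * Complex.exp (-(Complex.I * (q.2 : ℂ) * (q.1.2 : ℂ)))) := by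
      have h1 : Measurable (fun q : (Metric.sphere (0 : EuclideanSpace ℝ (Fin p)) 1 × ℝ) × ℝ =>
          lam q.1.1 q.2) := hmeas.comp ((measurable_fst.fst).prodMk measurable_snd)
      exact (Complex.measurable_ofReal.comp h1).mul
        (((measurable_const.mul (Complex.measurable_ofReal.comp measurable_snd)).mul
          (Complex.measurable_ofReal.comp measurable_fst.snd)).neg.cexp)
    have hft : StronglyMeasurable
        (fun q : Metric.sphere (0 : EuclideanSpace ℝ (Fin p)) 1 × ℝ =>
          ftSlice p lam q.1 q.2) := hH.stronglyMeasurable.integral_prod_right'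
    have hinner : Measurable (fun q : Metric.sphere (0 : EuclideanSpace ℝ (Fin p)) 1 × ℝ =>
        (⟪(q.1 : EuclideanSpace ℝ (Fin p)), z⟫ : ℝ)) := by
      exact (Continuous.inner (continuous_subtype_val.comp continuous_fst)
        continuous_const).measurable
    refine (hft.mul ?_).mul ?_
    · exact (((measurable_const.mul
        (Complex.measurable_ofReal.comp measurable_snd)).mul
        (Complex.measurable_ofReal.comp hinner)).cexp).stronglyMeasurable
    · exact (Complex.measurable_ofReal.comp
        ((measurable_snd.abs.pow_const _))).stronglyMeasurable
  have hFSM : AEStronglyMeasurable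
      (fun θ => ∫ r in {r : ℝ | |r| ≤ τ}, ftSlice p lam θ r *
          Complex.exp (Complex.I * (r:ℂ) *
            ((⟪(θ : EuclideanSpace ℝ (Fin p)), z⟫ : ℝ) : ℂ)) *
          ((|r| ^ (p-1) : ℝ) : ℂ)) (sphereMeasure p) :=
    (hGSM.integral_prod_right' (ν := volume.restrict {r : ℝ | |r| ≤ τ})).aestronglyMeasurable
  -- E : integrability of the sqrt of the slice L² norms
  have hIθ : Integrable (fun θ => ∫ u : ℝ, lam θ u ^ 2) (sphereMeasure p) :=
    hsq.integral_prod_left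
  have hE : Integrable (fun θ => Real.sqrt (∫ u : ℝ, lam θ u ^ 2)) (sphereMeasure p) := by
    refine ((integrable_const (1:ℝ)).add hIθ).mono'
      (Real.continuous_sqrt.comp_aestronglyMeasurable hIθ.aestronglyMeasurable)
      (Filter.Eventually.of_forall fun θ => ?_)
    rw [Real.norm_eq_abs, abs_of_nonneg (Real.sqrt_nonneg _)]
    exact sqrt_le_one_add _ (integral_nonneg fun u => sq_nonneg _)
  -- C : integrability of the inner integral over θ
  have hC : Integrable (fun θ => ∫ r in {r : ℝ | |r| ≤ τ}, ftSlice p lam θ r *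
      Complex.exp (Complex.I * (r:ℂ) *
        ((⟪(θ : EuclideanSpace ℝ (Fin p)), z⟫ : ℝ) : ℂ)) *
      ((|r| ^ (p-1) : ℝ) : ℂ)) (sphereMeasure p) := by
    refine Integrable.mono' (g := fun θ =>
      2 * τ ^ p * (Real.sqrt (2 * C₀) * Real.sqrt (∫ u : ℝ, lam θ u ^ 2))) ?_ hFSM hB
    exact (hE.const_mul (Real.sqrt (2 * C₀))).const_mul (2 * τ ^ p)
  -- D : integrability of the r-integrand
  have hD : ∀ᵐ θ ∂sphereMeasure p, IntegrableOn (fun r => ftSlice p lam θ r *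
      Complex.exp (Complex.I * (r:ℂ) *
        ((⟪(θ : EuclideanSpace ℝ (Fin p)), z⟫ : ℝ) : ℂ)) *
      ((|r| ^ (p-1) : ℝ) : ℂ)) {r : ℝ | |r| ≤ τ} volume := by
    filter_upwards [hA] with θ hAθ
    haveI : IsFiniteMeasure (volume.restrict {r : ℝ | |r| ≤ τ}) := by
      rw [hsetIcc]
      exact ⟨by rw [Measure.restrict_apply_univ]; exact hvolIcc⟩
    have hms : MeasurableSet {r : ℝ | |r| ≤ τ} := by rw [hsetIcc]; exact measurableSet_Icc
    refine Integrable.mono' (g := fun _ => (∫ u : ℝ, |lam θ u|) * τ ^ (p-1))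
      (integrable_const _)
      ((hGSM.comp_measurable measurable_prodMk_left).aestronglyMeasurable)
      (((ae_restrict_iff' hms).mpr (Filter.Eventually.of_forall fun r hr => ?_)))
    rw [norm_G_eq]
    refine mul_le_mul (ftSlice_norm_le p lam θ r) ?_ (pow_nonneg (abs_nonneg r) _)
      (integral_nonneg fun u => abs_nonneg _)
    exact pow_le_pow_left₀ (abs_nonneg r) hr _
  exact ⟨hA, hB, hC, hD, hE⟩
/-- Lipschitz bound for the regularized (frequency-truncated) back-projection (the error
term `Δ_{τ,2}`): for square-integrable slicing functions supported in `|u| ≤ C₀`,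
`|Ř_τ(λ₁)(z) − Ř_τ(λ₂)(z)| ≤ (2C₀ σ(S^{p-1}))^{1/2} / (2π)^p · τ^p · d₂(λ₁, λ₂)`. -/
theorem truncated_backprojection_lipschitz (p : ℕ) (hp : 1 ≤ p) (C₀ : ℝ) (hC₀ : 0 < C₀)
    (lam₁ lam₂ : Metric.sphere (0 : EuclideanSpace ℝ (Fin p)) 1 → ℝ → ℝ)
    (hmeas₁ : Measurable (fun q : Metric.sphere (0 : EuclideanSpace ℝ (Fin p)) 1 × ℝ =>
      lam₁ q.1 q.2))
    (hmeas₂ : Measurable (fun q : Metric.sphere (0 : EuclideanSpace ℝ (Fin p)) 1 × ℝ =>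
      lam₂ q.1 q.2))
    (hL₁ : MemLp (fun q : Metric.sphere (0 : EuclideanSpace ℝ (Fin p)) 1 × ℝ =>
      lam₁ q.1 q.2) 2 ((sphereMeasure p).prod volume))
    (hL₂ : MemLp (fun q : Metric.sphere (0 : EuclideanSpace ℝ (Fin p)) 1 × ℝ =>
      lam₂ q.1 q.2) 2 ((sphereMeasure p).prod volume))
    (hsupp₁ : ∀ θ (u : ℝ), C₀ < |u| → lam₁ θ u = 0)
    (hsupp₂ : ∀ θ (u : ℝ), C₀ < |u| → lam₂ θ u = 0)
    (τ : ℝ) (hτ : 0 < τ) (z : EuclideanSpace ℝ (Fin p)) :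
    ‖truncBackProj p lam₁ τ z - truncBackProj p lam₂ τ z‖ ≤
      Real.sqrt (2 * C₀ * (sphereMeasure p Set.univ).toReal) / (2 * Real.pi) ^ p *
        τ ^ p *
        Real.sqrt (∫ θ, (∫ u : ℝ, (lam₁ θ u - lam₂ θ u) ^ 2) ∂(sphereMeasure p)) := by
  haveI : IsFiniteMeasure (sphereMeasure p) := by unfold sphereMeasure; infer_instance
  set G : Metric.sphere (0 : EuclideanSpace ℝ (Fin p)) 1 → ℝ → ℝ :=
    fun θ u => lam₁ θ u - lam₂ θ u with hGdef
  have hmeasG : Measurable (fun q : Metric.sphere (0 : EuclideanSpace ℝ (Fin p)) 1 × ℝ =>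
      G q.1 q.2) := hmeas₁.sub hmeas₂
  have hLG : MemLp (fun q : Metric.sphere (0 : EuclideanSpace ℝ (Fin p)) 1 × ℝ =>
      G q.1 q.2) 2 ((sphereMeasure p).prod volume) := hL₁.sub hL₂
  have hsuppG : ∀ θ (u : ℝ), C₀ < |u| → G θ u = 0 := fun θ u hu => by
    simp only [hGdef, hsupp₁ θ u hu, hsupp₂ θ u hu, sub_zero]
  obtain ⟨hA₁, -, hC₁, hD₁, -⟩ := aux p hp C₀ hC₀ τ hτ z lam₁ hmeas₁ hL₁ hsupp₁
  obtain ⟨hA₂, -, hC₂, hD₂, -⟩ := aux p hp C₀ hC₀ τ hτ z lam₂ hmeas₂ hL₂ hsupp₂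
  obtain ⟨-, hBg, -, -, hEg⟩ := aux p hp C₀ hC₀ τ hτ z G hmeasG hLG hsuppG
  have hsec₁ : ∀ θ, Measurable (lam₁ θ) := fun θ => hmeas₁.comp measurable_prodMk_left
  have hsec₂ : ∀ θ, Measurable (lam₂ θ) := fun θ => hmeas₂.comp measurable_prodMk_left
  -- a.e. equality of the difference of inner integrals
  have hFdiff : ∀ᵐ θ ∂sphereMeasure p,
      (∫ r in {r : ℝ | |r| ≤ τ}, ftSlice p lam₁ θ r *
          Complex.exp (Complex.I * (r:ℂ) *
            ((⟪(θ : EuclideanSpace ℝ (Fin p)), z⟫ : ℝ) : ℂ)) * ((|r| ^ (p-1) : ℝ) : ℂ)) -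
      (∫ r in {r : ℝ | |r| ≤ τ}, ftSlice p lam₂ θ r *
          Complex.exp (Complex.I * (r:ℂ) *
            ((⟪(θ : EuclideanSpace ℝ (Fin p)), z⟫ : ℝ) : ℂ)) * ((|r| ^ (p-1) : ℝ) : ℂ)) =
      ∫ r in {r : ℝ | |r| ≤ τ}, ftSlice p G θ r *
          Complex.exp (Complex.I * (r:ℂ) *
            ((⟪(θ : EuclideanSpace ℝ (Fin p)), z⟫ : ℝ) : ℂ)) * ((|r| ^ (p-1) : ℝ) : ℂ) := by
    filter_upwards [hA₁, hA₂, hD₁, hD₂] with θ a1 a2 d1 d2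
    have hfteq : ∀ r : ℝ, ftSlice p lam₁ θ r - ftSlice p lam₂ θ r = ftSlice p G θ r := by
      intro r
      unfold ftSlice
      rw [← integral_sub (ft_integrand_integrable (lam₁ θ) (hsec₁ θ) a1 r)
        (ft_integrand_integrable (lam₂ θ) (hsec₂ θ) a2 r)]
      refine integral_congr_ae (Filter.Eventually.of_forall fun u => ?_)
      simp only [hGdef]
      push_cast
      ring
    rw [← integral_sub d1 d2]
    refine integral_congr_ae (Filter.Eventually.of_forall fun r => ?_)
    simp only []
    rw [← hfteq r]
    ring
  -- rewrite the difference of back-projections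
  have key : truncBackProj p lam₁ τ z - truncBackProj p lam₂ τ z =
      (1 / (2 * (2 * Real.pi) ^ p) : ℂ) *
        ∫ θ, (∫ r in {r : ℝ | |r| ≤ τ}, ftSlice p G θ r *
          Complex.exp (Complex.I * (r:ℂ) *
            ((⟪(θ : EuclideanSpace ℝ (Fin p)), z⟫ : ℝ) : ℂ)) * ((|r| ^ (p-1) : ℝ) : ℂ))
          ∂(sphereMeasure p) := by
    unfold truncBackProj
    rw [← mul_sub, ← integral_sub hC₁ hC₂, integral_congr_ae hFdiff]
  rw [key, norm_mul]
  have hπ : (0:ℝ) < (2 * Real.pi) ^ p := by positivity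
  have hnc : ‖(1 / (2 * (2 * Real.pi) ^ p) : ℂ)‖ = 1 / (2 * (2 * Real.pi) ^ p) := by
    rw [show (1 / (2 * (2 * Real.pi) ^ p) : ℂ) =
        ((1 / (2 * (2 * Real.pi) ^ p) : ℝ) : ℂ) by push_cast; ring,
      Complex.norm_real, Real.norm_eq_abs, abs_of_pos (by positivity)]
  have hsqint : Integrable (fun θ => ∫ u : ℝ, G θ u ^ 2) (sphereMeasure p) :=
    hLG.integrable_sq.integral_prod_left
  have hrwsq : (fun θ => Real.sqrt (∫ u : ℝ, G θ u ^ 2) ^ 2) =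
      fun θ => ∫ u : ℝ, G θ u ^ 2 :=
    funext fun θ => Real.sq_sqrt (integral_nonneg fun u => sq_nonneg _)
  have h3 : ∫ θ, Real.sqrt (∫ u : ℝ, G θ u ^ 2) ∂sphereMeasure p ≤
      Real.sqrt ((sphereMeasure p Set.univ)).toReal *
        Real.sqrt (∫ θ, (∫ u : ℝ, G θ u ^ 2) ∂sphereMeasure p) := by
    have := cs_integral (sphereMeasure p) hEg.aestronglyMeasurable
      (Filter.Eventually.of_forall fun θ => Real.sqrt_nonneg _)
      (by rw [hrwsq]; exact hsqint)
    rwa [hrwsq] at this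
  have h1 : ‖∫ θ, (∫ r in {r : ℝ | |r| ≤ τ}, ftSlice p G θ r *
      Complex.exp (Complex.I * (r:ℂ) *
        ((⟪(θ : EuclideanSpace ℝ (Fin p)), z⟫ : ℝ) : ℂ)) * ((|r| ^ (p-1) : ℝ) : ℂ))
      ∂(sphereMeasure p)‖ ≤
      2 * τ ^ p * (Real.sqrt (2 * C₀) *
        (Real.sqrt ((sphereMeasure p Set.univ)).toReal *
          Real.sqrt (∫ θ, (∫ u : ℝ, G θ u ^ 2) ∂sphereMeasure p))) := by
    refine (norm_integral_le_integral_norm _).trans ?_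
    have step : ∫ θ, ‖∫ r in {r : ℝ | |r| ≤ τ}, ftSlice p G θ r *
        Complex.exp (Complex.I * (r:ℂ) *
          ((⟪(θ : EuclideanSpace ℝ (Fin p)), z⟫ : ℝ) : ℂ)) * ((|r| ^ (p-1) : ℝ) : ℂ)‖
        ∂sphereMeasure p ≤
        ∫ θ, 2 * τ ^ p * (Real.sqrt (2 * C₀) * Real.sqrt (∫ u : ℝ, G θ u ^ 2))
          ∂sphereMeasure p :=
      integral_mono_of_nonneg (Filter.Eventually.of_forall fun θ => norm_nonneg _)
        ((hEg.const_mul (Real.sqrt (2 * C₀))).const_mul (2 * τ ^ p)) hBg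
    refine step.trans ?_
    rw [integral_const_mul, integral_const_mul]
    have := mul_le_mul_of_nonneg_left h3 (Real.sqrt_nonneg (2 * C₀))
    have := mul_le_mul_of_nonneg_left this (by positivity : (0:ℝ) ≤ 2 * τ ^ p)
    linarith
  calc ‖(1 / (2 * (2 * Real.pi) ^ p) : ℂ)‖ * ‖∫ θ, (∫ r in {r : ℝ | |r| ≤ τ},
        ftSlice p G θ r * Complex.exp (Complex.I * (r:ℂ) *
          ((⟪(θ : EuclideanSpace ℝ (Fin p)), z⟫ : ℝ) : ℂ)) * ((|r| ^ (p-1) : ℝ) : ℂ))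
        ∂(sphereMeasure p)‖
      ≤ (1 / (2 * (2 * Real.pi) ^ p)) * (2 * τ ^ p * (Real.sqrt (2 * C₀) *
          (Real.sqrt ((sphereMeasure p Set.univ)).toReal *
            Real.sqrt (∫ θ, (∫ u : ℝ, G θ u ^ 2) ∂sphereMeasure p)))) := by
        rw [hnc]
        exact mul_le_mul_of_nonneg_left h1 (by positivity)
    _ = Real.sqrt (2 * C₀ * (sphereMeasure p Set.univ).toReal) / (2 * Real.pi) ^ p *
        τ ^ p * Real.sqrt (∫ θ, (∫ u : ℝ, (lam₁ θ u - lam₂ θ u) ^ 2) ∂(sphereMeasure p)) := by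
        rw [Real.sqrt_mul (by positivity : (0:ℝ) ≤ 2 * C₀)]
        have : (fun θ => ∫ u : ℝ, G θ u ^ 2) =
            fun θ => ∫ u : ℝ, (lam₁ θ u - lam₂ θ u) ^ 2 := rfl
        rw [this]
        field_simp
end

section
/- Derivative interpolation with exponent 4/7 (Lemma S2): For every B₀ > 0 there exists a constant C depending only on B₀ with the following property. If h₁, h₂ : [0,1] → ℝ are three times continuously differentiable with ‖h₁⁗′‖_∞ ≤ B₀ and ‖h₂‴‖_∞ ≤ B₀ (i.e., both third derivatives are bounded by B₀ in sup norm on [0,1]), then for every s ∈ (0,1) satisfying min{s, 1−s} ≥ (∫₀¹ (h₁(u) − h₂(u))² du)^{1/7}, one has |h₁′(s) − h₂′(s)| ≤ C (∫₀¹ (h₁(u) − h₂(u))² du)^{2/7}. -/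
open MeasureTheory Set intervalIntegral

lemma poly_int4 (c₀ c₁ c₂ c₃ c₄ r : ℝ) :
    ∫ v in (0:ℝ)..r, (c₀ + c₁*v + c₂*v^2 + c₃*v^3 + c₄*v^4) =
      c₀*r + c₁*r^2/2 + c₂*r^3/3 + c₃*r^4/4 + c₄*r^5/5 := by
  have I : ∀ n : ℕ, IntervalIntegrable (fun v : ℝ => v ^ n) MeasureTheory.volume 0 r :=
    fun n => (continuous_pow n).intervalIntegrable 0 r
  have I' : ∀ (c : ℝ) (n : ℕ), IntervalIntegrable (fun v : ℝ => c * v ^ n) MeasureTheory.volume 0 r :=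
    fun c n => ((I n).const_mul c)
  have e : (fun v : ℝ => c₀ + c₁*v + c₂*v^2 + c₃*v^3 + c₄*v^4)
      = fun v => c₀ * v^0 + c₁*v^1 + c₂*v^2 + c₃*v^3 + c₄*v^4 := by funext v; ring
  rw [e, integral_add (((((I' c₀ 0).add (I' c₁ 1)).add (I' c₂ 2)).add (I' c₃ 3))) (I' c₄ 4),
    integral_add ((((I' c₀ 0).add (I' c₁ 1)).add (I' c₂ 2))) (I' c₃ 3),
    integral_add (((I' c₀ 0).add (I' c₁ 1))) (I' c₂ 2),
    integral_add ((I' c₀ 0)) (I' c₁ 1)]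
  simp only [intervalIntegral.integral_const_mul, integral_pow]
  norm_num
  ring

/-- transfer of iterated derivatives from `Icc 0 1` to a subinterval. -/
lemma iter_transfer {f : ℝ → ℝ} {a b : ℝ} (hab : a < b)
    (hsub : Set.Icc a b ⊆ Set.Icc (0:ℝ) 1) (hf : ContDiffOn ℝ 3 f (Set.Icc 0 1))
    {k : ℕ} (hk : k ≤ 3) :
    ∀ y ∈ Set.Icc a b,
      iteratedDerivWithin k f (Set.Icc a b) y = iteratedDerivWithin k f (Set.Icc 0 1) y := by
  induction k with
  | zero => intro y _; simp
  | succ k IH =>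
    intro y hy
    have hk' : k ≤ 3 := Nat.le_of_succ_le hk
    have hklt : (k : WithTop ℕ∞) < 3 := by exact_mod_cast Nat.lt_of_succ_le hk
    have u1 : UniqueDiffOn ℝ (Set.Icc (0:ℝ) 1) := uniqueDiffOn_Icc one_pos
    have u2 : UniqueDiffOn ℝ (Set.Icc a b) := uniqueDiffOn_Icc hab
    have hdiff : DifferentiableWithinAt ℝ (iteratedDerivWithin k f (Set.Icc 0 1))
        (Set.Icc (0:ℝ) 1) y :=
      hf.differentiableOn_iteratedDerivWithin hklt u1 y (hsub hy)
    rw [iteratedDerivWithin_succ, iteratedDerivWithin_succ]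
    have h1 : derivWithin (iteratedDerivWithin k f (Set.Icc a b)) (Set.Icc a b) y
        = derivWithin (iteratedDerivWithin k f (Set.Icc 0 1)) (Set.Icc a b) y :=
      derivWithin_congr (IH hk') (IH hk' y hy)
    rw [h1]
    exact (hdiff.hasDerivWithinAt.mono hsub).derivWithin (u2 y hy)

lemma key_bound {g : ℝ → ℝ} (hg : ContDiffOn ℝ 3 g (Set.Icc 0 1)) {B : ℝ}
    (hB : ∀ u ∈ Set.Icc (0:ℝ) 1, |iteratedDerivWithin 3 g (Set.Icc 0 1) u| ≤ B)
    {s r : ℝ} (hs0 : 0 ≤ s) (hr : 0 < r) (hsr : s + r ≤ 1) :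
    |derivWithin g (Set.Icc 0 1) s| ≤
      408 / r^2 * (∫ v in (0:ℝ)..r, |g (s + v)|) + 51 * B * r^2 := by
  have hB0 : 0 ≤ B := (abs_nonneg _).trans (hB 0 ⟨le_refl _, zero_le_one⟩)
  have hrne : r ≠ 0 := hr.ne'
  have hsb : s < s + r := by linarith
  have hsub : Set.Icc s (s+r) ⊆ Set.Icc (0:ℝ) 1 := by
    intro x hx; exact ⟨le_trans hs0 hx.1, le_trans hx.2 hsr⟩
  have hs01 : s ∈ Set.Icc (0:ℝ) 1 := ⟨hs0, by linarith⟩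
  have u1 : UniqueDiffOn ℝ (Set.Icc (0:ℝ) 1) := uniqueDiffOn_Icc one_pos
  set d0 := g s with hd0
  set d1 := derivWithin g (Set.Icc 0 1) s with hd1
  set d2 := iteratedDerivWithin 2 g (Set.Icc 0 1) s with hd2
  set a₀ : ℝ := -36/r^2 with ha₀
  set a₁ : ℝ := 192/r^3 with ha₁
  set a₂ : ℝ := -180/r^4 with ha₂
  set W : ℝ → ℝ := fun v => a₀ + a₁*v + a₂*v^2 with hW
  set Q : ℝ → ℝ := fun v => d0 + d1*v + d2*v^2/2 with hQ
  -- Taylor bound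
  have hsmem : s ∈ Set.Icc s (s+r) := ⟨le_refl _, hsb.le⟩
  have hTpoly : ∀ u : ℝ, taylorWithinEval g 2 (Set.Icc s (s+r)) s u = Q (u - s) := by
    intro u
    rw [show (2:ℕ) = 1 + 1 from rfl, taylorWithinEval_succ, taylorWithinEval_succ,
      taylor_within_zero_eval]
    rw [iter_transfer hsb hsub hg (by norm_num) s hsmem,
      iter_transfer hsb hsub hg (by norm_num) s hsmem,
      iteratedDerivWithin_one]
    simp [hQ, smul_eq_mul]
    ring
  have hTay : ∀ u ∈ Set.Icc s (s+r), |g u - Q (u - s)| ≤ B * (u-s)^3 / 2 := by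
    intro u hu
    have hC : ∀ y ∈ Set.Icc s (s+r), ‖iteratedDerivWithin 3 g (Set.Icc s (s+r)) y‖ ≤ B := by
      intro y hy
      rw [Real.norm_eq_abs, iter_transfer hsb hsub hg (le_refl _) y hy]
      exact hB y (hsub hy)
    have := taylor_mean_remainder_bound (n := 2) hsb.le
      (by exact_mod_cast hg.mono hsub) hu hC
    rw [hTpoly u] at this
    simpa [Real.norm_eq_abs, Nat.factorial] using this
  -- moment identity
  have M : (∫ v in (0:ℝ)..r, W v * Q v) = d1 := by
    have e : (fun v : ℝ => W v * Q v) = fun v =>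
        (a₀*d0) + (a₀*d1 + a₁*d0)*v + (a₀*d2/2 + a₁*d1 + a₂*d0)*v^2
          + (a₁*d2/2 + a₂*d1)*v^3 + (a₂*d2/2)*v^4 := by
      funext v; simp only [hW, hQ]; ring
    rw [e, poly_int4]
    simp only [ha₀, ha₁, ha₂]
    field_simp
    ring
  -- weight bound
  have hWb : ∀ v ∈ Set.Icc (0:ℝ) r, |W v| ≤ 408 / r^2 := by
    intro v hv
    have h2 : (0:ℝ) < r^2 := by positivity
    have h4 : (0:ℝ) < r^4 := by positivity
    have eW : W v = (-36*r^2 + 192*r*v - 180*v^2)/r^4 := by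
      simp only [hW, ha₀, ha₁, ha₂]; field_simp; ring
    rw [eW, abs_div, abs_of_pos h4, div_le_div_iff₀ h4 h2]
    have h1 : |(-36*r^2 + 192*r*v - 180*v^2)| ≤ 408 * r^2 := by
      rw [abs_le]
      constructor <;> nlinarith [hv.1, hv.2, sq_nonneg (r - v), sq_nonneg (r + v),
        mul_nonneg hv.1 hv.1, mul_nonneg (mul_nonneg hr.le hv.1) hv.1]
    calc |(-36*r^2 + 192*r*v - 180*v^2)| * r^2 ≤ 408 * r^2 * r^2 :=
          mul_le_mul_of_nonneg_right h1 h2.le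
      _ = 408 * r^4 := by ring
  -- integrability
  have hgc : ContinuousOn g (Set.Icc 0 1) := hg.continuousOn
  have hmap : Set.MapsTo (fun v : ℝ => s + v) (Set.Icc 0 r) (Set.Icc (0:ℝ) 1) := by
    intro v hv
    simp only [Set.mem_Icc] at hv ⊢
    constructor <;> linarith [hv.1, hv.2]
  have hgsv : ContinuousOn (fun v => g (s + v)) (Set.Icc 0 r) :=
    hgc.comp ((continuous_const.add continuous_id).continuousOn) hmap
  have hWc : Continuous W := by
    simp only [hW]
    exact (continuous_const.add ((continuous_const.mul (continuous_id : Continuous fun v : ℝ => v)))).add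
      (continuous_const.mul (continuous_pow 2))
  have hQc : Continuous Q := by
    simp only [hQ]
    exact (continuous_const.add ((continuous_const.mul (continuous_id : Continuous fun v : ℝ => v)))).add
      ((continuous_const.mul (continuous_pow 2)).div_const 2)
  have uIcc0r : Set.uIcc (0:ℝ) r = Set.Icc 0 r := Set.uIcc_of_le hr.le
  have IW : IntervalIntegrable (fun v => W v * g (s+v)) volume 0 r := by
    apply ContinuousOn.intervalIntegrable
    rw [uIcc0r]; exact hWc.continuousOn.mul hgsv
  have IQ : IntervalIntegrable (fun v => W v * Q v) volume 0 r :=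
    (hWc.mul hQc).intervalIntegrable _ _
  have IR : IntervalIntegrable (fun v => W v * (g (s+v) - Q v)) volume 0 r := by
    have e : (fun v => W v * (g (s+v) - Q v)) = fun v => W v * g (s+v) - W v * Q v := by
      funext v; ring
    rw [e]; exact IW.sub IQ
  -- split identity
  have split : d1 = (∫ v in (0:ℝ)..r, W v * g (s+v))
      - ∫ v in (0:ℝ)..r, W v * (g (s+v) - Q v) := by
    rw [← integral_sub IW IR, ← M]
    apply integral_congr
    intro v _
    ring
  -- error bound
  have E2 : |∫ v in (0:ℝ)..r, W v * (g (s+v) - Q v)| ≤ 51 * B * r^2 := by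
    have h1 := abs_integral_le_integral_abs (f := fun v => W v * (g (s+v) - Q v)) (μ := volume) hr.le
    have h2 : (∫ v in (0:ℝ)..r, |W v * (g (s+v) - Q v)|)
        ≤ ∫ v in (0:ℝ)..r, 408/r^2 * (B * v^3/2) := by
      apply integral_mono_on hr.le IR.abs
      · exact (continuous_const.mul ((continuous_const.mul (continuous_pow 3)).div_const 2)).intervalIntegrable _ _
      · intro v hv
        rw [abs_mul]
        have h3 : |g (s+v) - Q v| ≤ B * v^3/2 := by
          have := hTay (s+v) ⟨by linarith [hv.1], by linarith [hv.2]⟩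
          simpa using this
        exact mul_le_mul (hWb v hv) h3 (abs_nonneg _) (by positivity)
    have h3 : (∫ v in (0:ℝ)..r, 408/r^2 * (B * v^3/2)) = 51*B*r^2 := by
      have e : (fun v : ℝ => 408/r^2 * (B * v^3/2))
          = fun v => 0 + 0*v + 0*v^2 + (204*B/r^2)*v^3 + 0*v^4 := by funext v; ring
      rw [e, poly_int4]
      field_simp
      ring
    linarith
  -- main integral bound
  have E1 : |∫ v in (0:ℝ)..r, W v * g (s+v)|
      ≤ 408/r^2 * ∫ v in (0:ℝ)..r, |g (s+v)| := by
    have h1 := abs_integral_le_integral_abs (f := fun v => W v * g (s+v)) (μ := volume) hr.le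
    have h2 : (∫ v in (0:ℝ)..r, |W v * g (s+v)|)
        ≤ ∫ v in (0:ℝ)..r, 408/r^2 * |g (s+v)| := by
      apply integral_mono_on hr.le IW.abs
      · apply ContinuousOn.intervalIntegrable
        rw [uIcc0r]; exact continuousOn_const.mul hgsv.abs
      · intro v hv
        rw [abs_mul]
        exact mul_le_mul_of_nonneg_right (hWb v hv) (abs_nonneg _)
    rw [intervalIntegral.integral_const_mul] at h2
    linarith
  calc |d1| = |(∫ v in (0:ℝ)..r, W v * g (s+v))
      - ∫ v in (0:ℝ)..r, W v * (g (s+v) - Q v)| := by rw [← split]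
    _ ≤ |∫ v in (0:ℝ)..r, W v * g (s+v)|
        + |∫ v in (0:ℝ)..r, W v * (g (s+v) - Q v)| := abs_sub _ _
    _ ≤ 408/r^2 * (∫ v in (0:ℝ)..r, |g (s + v)|) + 51 * B * r^2 := add_le_add E1 E2

lemma J_bound {g : ℝ → ℝ} (hgc : ContinuousOn g (Set.Icc 0 1)) {s r ε : ℝ}
    (hs0 : 0 ≤ s) (hr : 0 < r) (hsr : s + r ≤ 1) (hε : 0 < ε) :
    (∫ v in (0:ℝ)..r, |g (s + v)|)
      ≤ (∫ u in (0:ℝ)..1, (g u)^2)/(2*ε) + ε*r/2 := by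
  have uIcc0r : Set.uIcc (0:ℝ) r = Set.Icc 0 r := Set.uIcc_of_le hr.le
  have hmap : Set.MapsTo (fun v : ℝ => s + v) (Set.Icc 0 r) (Set.Icc (0:ℝ) 1) := by
    intro v hv
    simp only [Set.mem_Icc] at hv ⊢
    constructor <;> linarith [hv.1, hv.2]
  have hgsv : ContinuousOn (fun v => g (s + v)) (Set.Icc 0 r) :=
    hgc.comp ((continuous_const.add (continuous_id : Continuous fun v : ℝ => v)).continuousOn) hmap
  have I1 : IntervalIntegrable (fun v => |g (s+v)|) volume 0 r := by
    apply ContinuousOn.intervalIntegrable; rw [uIcc0r]; exact hgsv.abs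
  have I2' : IntervalIntegrable (fun v => (g (s+v))^2/(2*ε)) volume 0 r := by
    apply ContinuousOn.intervalIntegrable; rw [uIcc0r]
    exact (hgsv.pow 2).div_const _
  have I2 : IntervalIntegrable (fun v => (g (s+v))^2/(2*ε) + ε/2) volume 0 r :=
    I2'.add intervalIntegrable_const
  have step1 : (∫ v in (0:ℝ)..r, |g (s+v)|)
      ≤ ∫ v in (0:ℝ)..r, ((g (s+v))^2/(2*ε) + ε/2) := by
    apply integral_mono_on hr.le I1 I2
    intro v _
    have h2 : 2*ε*|g (s+v)| ≤ (g (s+v))^2 + ε^2 := by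
      nlinarith [sq_nonneg (|g (s+v)| - ε), sq_abs (g (s+v))]
    rw [show (g (s+v))^2/(2*ε) + ε/2 = ((g (s+v))^2 + ε^2)/(2*ε) by field_simp,
      le_div_iff₀ (by positivity)]
    linarith
  have step2 : (∫ v in (0:ℝ)..r, ((g (s+v))^2/(2*ε) + ε/2))
      = (∫ v in (0:ℝ)..r, (g (s+v))^2)/(2*ε) + ε*r/2 := by
    rw [integral_add I2' intervalIntegrable_const, intervalIntegral.integral_div, intervalIntegral.integral_const]
    simp [smul_eq_mul]
    ring
  have step3 : (∫ v in (0:ℝ)..r, (g (s+v))^2) = ∫ u in s..(s+r), (g u)^2 := by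
    have h := integral_comp_add_right (a := (0:ℝ)) (b := r) (fun u => (g u)^2) s
    simp only [zero_add] at h
    rw [show s + r = r + s from add_comm s r, ← h]
    apply integral_congr
    intro v _
    simp [add_comm]
  have step4 : (∫ u in s..(s+r), (g u)^2) ≤ ∫ u in (0:ℝ)..1, (g u)^2 := by
    apply integral_mono_interval hs0 (by linarith : s ≤ s + r) hsr
    · exact Filter.Eventually.of_forall fun x => sq_nonneg _
    · apply ContinuousOn.intervalIntegrable
      rw [Set.uIcc_of_le (by norm_num : (0:ℝ) ≤ 1)]
      exact hgc.pow 2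
  have hdiv : (∫ v in (0:ℝ)..r, (g (s+v))^2)/(2*ε) ≤ (∫ u in (0:ℝ)..1, (g u)^2)/(2*ε) := by
    apply div_le_div_of_nonneg_right ?_ (by positivity)
    rw [step3]; exact step4
  linarith [step1, step2.le, step2.ge, hdiv]

/-- Derivative interpolation with exponent 4/7 (Lemma S2): for every `B₀ > 0` there is a
constant `C` depending only on `B₀` such that for all functions `h₁, h₂` that are three times
continuously differentiable on `[0,1]` with third derivatives bounded by `B₀`, and every
interior point `s` with `min{s, 1-s} ≥ d₂(h₁,h₂)^{2/7}`,
`|h₁'(s) − h₂'(s)| ≤ C d₂(h₁,h₂)^{4/7}` where `d₂` is the `L²([0,1])` distance. -/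
theorem deriv_interpolation_four_sevenths (B₀ : ℝ) (hB₀ : 0 < B₀) :
    ∃ C : ℝ, ∀ h₁ h₂ : ℝ → ℝ,
      ContDiffOn ℝ 3 h₁ (Set.Icc 0 1) →
      ContDiffOn ℝ 3 h₂ (Set.Icc 0 1) →
      (∀ u ∈ Set.Icc (0 : ℝ) 1, |iteratedDerivWithin 3 h₁ (Set.Icc 0 1) u| ≤ B₀) →
      (∀ u ∈ Set.Icc (0 : ℝ) 1, |iteratedDerivWithin 3 h₂ (Set.Icc 0 1) u| ≤ B₀) →
      ∀ s ∈ Set.Ioo (0 : ℝ) 1,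
        (∫ u in (0 : ℝ)..1, (h₁ u - h₂ u) ^ 2) ^ ((1 : ℝ) / 7) ≤ min s (1 - s) →
        |derivWithin h₁ (Set.Icc 0 1) s - derivWithin h₂ (Set.Icc 0 1) s| ≤
          C * (∫ u in (0 : ℝ)..1, (h₁ u - h₂ u) ^ 2) ^ ((2 : ℝ) / 7) := by
  refine ⟨408 + 102 * B₀, ?_⟩
  intro h₁ h₂ hc1 hc2 hb1 hb2 s hs hmin
  have uS : UniqueDiffOn ℝ (Set.Icc (0:ℝ) 1) := uniqueDiffOn_Icc one_pos
  set D : ℝ := ∫ u in (0:ℝ)..1, (h₁ u - h₂ u)^2 with hDdef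
  set g : ℝ → ℝ := fun u => h₁ u - h₂ u with hgdef
  have hg : ContDiffOn ℝ 3 g (Set.Icc 0 1) := hc1.sub hc2
  have hDg : (∫ u in (0:ℝ)..1, (g u)^2) = D := by
    rw [hDdef]
  have hD0 : 0 ≤ D := by
    rw [hDdef]
    exact intervalIntegral.integral_nonneg (by norm_num) fun u _ => sq_nonneg _
  have hs01 : s ∈ Set.Icc (0:ℝ) 1 := ⟨hs.1.le, hs.2.le⟩
  have hone : (1 : WithTop ℕ∞) ≤ 3 := by norm_num
  have hdw : derivWithin h₁ (Set.Icc 0 1) s - derivWithin h₂ (Set.Icc 0 1) s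
      = derivWithin g (Set.Icc 0 1) s :=
    (derivWithin_sub ((hc1.differentiableOn (by norm_num)) s hs01)
      ((hc2.differentiableOn (by norm_num)) s hs01)).symm
  have hBg : ∀ u ∈ Set.Icc (0:ℝ) 1, |iteratedDerivWithin 3 g (Set.Icc 0 1) u| ≤ 2*B₀ := by
    intro u hu
    have e : iteratedDerivWithin 3 g (Set.Icc 0 1) u
        = iteratedDerivWithin 3 h₁ (Set.Icc 0 1) u
          - iteratedDerivWithin 3 h₂ (Set.Icc 0 1) u := by
      exact iteratedDerivWithin_sub hu uS (hc1 u hu) (hc2 u hu)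
    rw [e]
    calc |iteratedDerivWithin 3 h₁ (Set.Icc 0 1) u - iteratedDerivWithin 3 h₂ (Set.Icc 0 1) u|
        ≤ |iteratedDerivWithin 3 h₁ (Set.Icc 0 1) u|
          + |iteratedDerivWithin 3 h₂ (Set.Icc 0 1) u| := abs_sub _ _
      _ ≤ B₀ + B₀ := add_le_add (hb1 u hu) (hb2 u hu)
      _ = 2*B₀ := by ring
  rw [hdw]
  rcases eq_or_lt_of_le hD0 with hD | hD
  · -- D = 0
    rw [← hD, Real.zero_rpow (by norm_num : (2:ℝ)/7 ≠ 0), mul_zero]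
    refine le_of_forall_pos_le_add ?_
    intro ε hε
    set r : ℝ := min (min s (1-s)) (Real.sqrt (ε/(102*B₀))) with hrdef
    have hr : 0 < r := lt_min (lt_min hs.1 (by linarith [hs.2])) (Real.sqrt_pos.mpr (by positivity))
    have hsr : s + r ≤ 1 := by
      have h1 : r ≤ 1 - s := le_trans (min_le_left _ _) (min_le_right _ _)
      linarith
    have hkey := key_bound hg hBg hs.1.le hr hsr
    have hJ : (∫ v in (0:ℝ)..r, |g (s+v)|) ≤ 0 := by
      refine le_of_forall_pos_le_add ?_
      intro η hη
      have hJb := J_bound hg.continuousOn hs.1.le hr hsr (ε := η/r) (by positivity)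
      rw [hDg, ← hD] at hJb
      calc (∫ v in (0:ℝ)..r, |g (s+v)|) ≤ 0/(2*(η/r)) + (η/r)*r/2 := hJb
        _ = η/2 := by field_simp; ring
        _ ≤ 0 + η := by linarith
    have hJ0 : 408/r^2 * (∫ v in (0:ℝ)..r, |g (s+v)|) ≤ 0 :=
      mul_nonpos_of_nonneg_of_nonpos (by positivity) hJ
    have hr2 : 51*(2*B₀)*r^2 ≤ ε := by
      have h1 : r ≤ Real.sqrt (ε/(102*B₀)) := min_le_right _ _
      have h2 : r^2 ≤ ε/(102*B₀) := by
        rw [← Real.sq_sqrt (le_of_lt (by positivity : (0:ℝ) < ε/(102*B₀)))]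
        exact pow_le_pow_left₀ hr.le h1 2
      calc 51*(2*B₀)*r^2 ≤ 51*(2*B₀)*(ε/(102*B₀)) :=
            mul_le_mul_of_nonneg_left h2 (by positivity)
        _ = ε := by field_simp; ring
    calc |derivWithin g (Set.Icc 0 1) s|
        ≤ 408/r^2 * (∫ v in (0:ℝ)..r, |g (s+v)|) + 51*(2*B₀)*r^2 := hkey
      _ ≤ 0 + ε := by linarith
  · -- D > 0
    set r : ℝ := D ^ ((1:ℝ)/7) with hrdef
    have hr : 0 < r := Real.rpow_pos_of_pos hD _
    have hsr : s + r ≤ 1 := by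
      have h1 : r ≤ 1 - s := le_trans hmin (min_le_right _ _)
      linarith
    have hkey := key_bound hg hBg hs.1.le hr hsr
    set ε : ℝ := D ^ ((3:ℝ)/7) with hεdef
    have hε : 0 < ε := Real.rpow_pos_of_pos hD _
    have hJ := J_bound hg.continuousOn hs.1.le hr hsr hε
    rw [hDg] at hJ
    have hr2 : r^2 = D ^ ((2:ℝ)/7) := by
      rw [hrdef, ← Real.rpow_natCast (D ^ ((1:ℝ)/7)) 2, ← Real.rpow_mul hD0]
      norm_num
    have h1 : ε * r = D ^ ((4:ℝ)/7) := by
      rw [hrdef, hεdef, ← Real.rpow_add hD]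
      norm_num
    have h3 : D ^ ((4:ℝ)/7) = D / ε := by
      rw [show (4:ℝ)/7 = 1 - 3/7 by norm_num, Real.rpow_sub hD, Real.rpow_one, hεdef]
    have hDe : D/(2*ε) + ε*r/2 = D ^ ((4:ℝ)/7) := by
      rw [h1, h3]
      field_simp
      ring
    have hJ' : (∫ v in (0:ℝ)..r, |g (s+v)|) ≤ D^((4:ℝ)/7) := by
      rw [← hDe]; exact hJ
    have h4 : D^((4:ℝ)/7) / D^((2:ℝ)/7) = D^((2:ℝ)/7) := by
      rw [← Real.rpow_sub hD]; norm_num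
    have t1 : 408/r^2 * (∫ v in (0:ℝ)..r, |g (s+v)|) ≤ 408 * D^((2:ℝ)/7) := by
      calc 408/r^2 * (∫ v in (0:ℝ)..r, |g (s+v)|)
          ≤ 408/r^2 * D^((4:ℝ)/7) := mul_le_mul_of_nonneg_left hJ' (by positivity)
        _ = 408 * (D^((4:ℝ)/7) / D^((2:ℝ)/7)) := by rw [hr2]; ring
        _ = 408 * D^((2:ℝ)/7) := by rw [h4]
    calc |derivWithin g (Set.Icc 0 1) s|
        ≤ 408/r^2 * (∫ v in (0:ℝ)..r, |g (s+v)|) + 51*(2*B₀)*r^2 := hkey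
      _ ≤ 408 * D^((2:ℝ)/7) + 51*(2*B₀)*D^((2:ℝ)/7) := by rw [hr2] at t1 ⊢; linarith
      _ = (408 + 102*B₀) * D^((2:ℝ)/7) := by ring
end

section
/- Derivative estimation via kernel derivative: Let 𝒦 : ℝ → ℝ be a continuously differentiable symmetric (𝒦(−v) = 𝒦(v)) probability density supported in [−1, 1] with 𝒦(−1) = 𝒦(1) = 0 and bounded derivative 𝒦′. Let h : [0,1] → ℝ be three times continuously differentiable with ‖h‴‖_∞ ≤ B₀. Then for every s ∈ (0,1) and every bandwidth a with 0 < a ≤ min{s, 1−s}, | ∫₀¹ a^{−2} h(u) 𝒦′((s−u)/a) du − h′(s) | ≤ (B₀ a² / 6) ∫_{−1}^{1} |v|³ |𝒦′(v)| dv. -/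
open MeasureTheory Set

section helpers

lemma iterDW_subset {f : ℝ → ℝ} {s t : Set ℝ} (hst : t ⊆ s) (hs : UniqueDiffOn ℝ s)
    (ht : UniqueDiffOn ℝ t) {m : ℕ} (hmn : (m : ℕ∞) ≤ 3) (hf : ContDiffOn ℝ 3 f s)
    {x : ℝ} (hx : x ∈ t) : iteratedDerivWithin m f t x = iteratedDerivWithin m f s x := by
  have H := (hf.ftaylorSeriesWithin hs).mono hst
  have h1 := H.eq_iteratedFDerivWithin_of_uniqueDiffOn (by exact_mod_cast hmn) ht hx
  have h2 := (hf.ftaylorSeriesWithin hs).eq_iteratedFDerivWithin_of_uniqueDiffOn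
    (by exact_mod_cast hmn) hs (hst hx)
  rw [iteratedDerivWithin_eq_iteratedFDerivWithin, iteratedDerivWithin_eq_iteratedFDerivWithin,
    ← h1, ← h2]

lemma iterDW_refl {f : ℝ → ℝ} {y x : ℝ} (hyx : y < x)
    (hf : ContDiffOn ℝ 3 f (Icc y x)) :
    ∀ n : ℕ, n ≤ 3 → ∀ z ∈ Icc y x,
      iteratedDerivWithin n (fun w => f (x + y - w)) (Icc y x) z
        = (-1 : ℝ) ^ n * iteratedDerivWithin n f (Icc y x) (x + y - z) := by
  have hud : UniqueDiffOn ℝ (Icc y x) := uniqueDiffOn_Icc hyx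
  have hmaps : ∀ z ∈ Icc y x, x + y - z ∈ Icc y x := by
    rintro z ⟨h1, h2⟩; exact ⟨by linarith, by linarith⟩
  intro n
  induction n with
  | zero => intro _ z hz; simp
  | succ n IH =>
    intro hn z hz
    have hz' : x + y - z ∈ Icc y x := hmaps z hz
    have hIH := IH (by omega)
    rw [iteratedDerivWithin_succ]
    rw [derivWithin_congr (fun w hw => hIH w hw) (hIH z hz)]
    have hF : DifferentiableOn ℝ (iteratedDerivWithin n f (Icc y x)) (Icc y x) :=
      hf.differentiableOn_iteratedDerivWithin (by exact_mod_cast (by omega : n < 3)) hud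
    have hd : HasDerivWithinAt (iteratedDerivWithin n f (Icc y x))
        (derivWithin (iteratedDerivWithin n f (Icc y x)) (Icc y x) (x + y - z))
        (Icc y x) (x + y - z) := (hF _ hz').hasDerivWithinAt
    have hr : HasDerivWithinAt (fun w : ℝ => x + y - w) (-1) (Icc y x) z := by
      simpa using (hasDerivWithinAt_id z (Icc y x)).const_sub (x + y)
    have hcomp := HasDerivWithinAt.scomp z hd hr (fun w hw => hmaps w hw)
    have hmul := hcomp.const_mul ((-1 : ℝ) ^ n)
    have hmul' : HasDerivWithinAt (fun w => (-1 : ℝ) ^ n * iteratedDerivWithin n f (Icc y x) (x + y - w))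
        ((-1 : ℝ) ^ n * (-1 : ℝ) • derivWithin (iteratedDerivWithin n f (Icc y x)) (Icc y x) (x + y - z))
        (Icc y x) z := hmul
    rw [hmul'.derivWithin (hud z hz)]
    rw [iteratedDerivWithin_succ]
    simp only [smul_eq_mul]
    ring

lemma taylor3_bound {f : ℝ → ℝ} (hf : ContDiffOn ℝ 3 f (Icc 0 1)) {B : ℝ}
    (hB : ∀ u ∈ Icc (0:ℝ) 1, |iteratedDerivWithin 3 f (Icc 0 1) u| ≤ B)
    {x y : ℝ} (hx : x ∈ Icc (0:ℝ) 1) (hy : y ∈ Icc (0:ℝ) 1) :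
    |f y - f x - derivWithin f (Icc 0 1) x * (y - x)
      - iteratedDerivWithin 2 f (Icc 0 1) x * (y - x) ^ 2 / 2| ≤ B * |y - x| ^ 3 / 6 := by
  have hud01 : UniqueDiffOn ℝ (Icc (0:ℝ) 1) := uniqueDiffOn_Icc zero_lt_one
  have hB0 : 0 ≤ B := le_trans (abs_nonneg _) (hB 0 (by norm_num))
  rcases lt_trichotomy x y with hxy | hxy | hxy
  · -- x < y
    have hsub : Icc x y ⊆ Icc (0:ℝ) 1 := Icc_subset_Icc hx.1 hy.2
    have hudxy : UniqueDiffOn ℝ (Icc x y) := uniqueDiffOn_Icc hxy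
    obtain ⟨x', hx', heq⟩ := taylor_mean_remainder_lagrange (n := 2) hxy.ne
      (by rw [uIcc_of_le hxy.le]; exact ((hf.mono hsub).of_le (by norm_num)))
      (by rw [uIcc_of_le hxy.le, uIoo_of_le hxy.le]; exact
        (((hf.mono hsub).differentiableOn_iteratedDerivWithin (by norm_num) hudxy).mono
        Ioo_subset_Icc_self))
    rw [uIoo_of_le hxy.le] at hx'
    rw [uIcc_of_le hxy.le] at heq
    have t1 : iteratedDerivWithin 1 f (Icc x y) x = derivWithin f (Icc 0 1) x := by
      rw [iterDW_subset hsub hud01 hudxy (by norm_num) hf (left_mem_Icc.2 hxy.le)]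
      exact congrFun iteratedDerivWithin_one x
    have t2 : iteratedDerivWithin 2 f (Icc x y) x = iteratedDerivWithin 2 f (Icc 0 1) x :=
      iterDW_subset hsub hud01 hudxy (by norm_num) hf (left_mem_Icc.2 hxy.le)
    have t3 : iteratedDerivWithin 3 f (Icc x y) x' = iteratedDerivWithin 3 f (Icc 0 1) x' :=
      iterDW_subset hsub hud01 hudxy (by norm_num) hf (Ioo_subset_Icc_self hx')
    rw [taylor_within_apply] at heq
    simp only [Finset.sum_range_succ, Finset.sum_range_zero, t1, t2, t3] at heq
    norm_num [Nat.factorial] at heq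
    have habs : |y - x| = y - x := abs_of_pos (by linarith)
    have hb := hB x' (hsub (Ioo_subset_Icc_self hx'))
    have hmain : f y - f x - derivWithin f (Icc 0 1) x * (y - x)
        - iteratedDerivWithin 2 f (Icc 0 1) x * (y - x) ^ 2 / 2
        = iteratedDerivWithin 3 f (Icc 0 1) x' * (y - x) ^ 3 / 6 := by
      linarith [heq]
    rw [hmain, habs]
    rw [abs_div, abs_mul, abs_pow]
    rw [abs_of_pos (by linarith : (0:ℝ) < y - x), abs_of_pos (by norm_num : (0:ℝ) < 6)]
    have h3 : (0:ℝ) ≤ (y - x) ^ 3 := pow_nonneg (by linarith) 3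
    exact (div_le_div_iff_of_pos_right (by norm_num : (0:ℝ) < 6)).mpr
      (mul_le_mul_of_nonneg_right hb h3)
  · -- x = y
    subst hxy
    simp [hB0]
  · -- y < x
    have hsub : Icc y x ⊆ Icc (0:ℝ) 1 := Icc_subset_Icc hy.1 hx.2
    have hudyx : UniqueDiffOn ℝ (Icc y x) := uniqueDiffOn_Icc hxy
    have hmaps : Set.MapsTo (fun w : ℝ => x + y - w) (Icc y x) (Icc y x) := by
      rintro z ⟨h1, h2⟩; exact ⟨by simp; linarith, by simp; linarith⟩
    have hg : ContDiffOn ℝ 3 (fun w => f (x + y - w)) (Icc y x) :=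
      (hf.mono hsub).comp ((contDiff_const.sub contDiff_id).contDiffOn) hmaps
    have hrefl := iterDW_refl hxy (hf.mono hsub)
    obtain ⟨x', hx', heq⟩ := taylor_mean_remainder_lagrange (n := 2) hxy.ne
      (by rw [uIcc_of_le hxy.le]; exact (hg.of_le (by norm_num)))
      (by rw [uIcc_of_le hxy.le, uIoo_of_le hxy.le]; exact
        ((hg.differentiableOn_iteratedDerivWithin (by norm_num) hudyx).mono Ioo_subset_Icc_self))
    rw [uIoo_of_le hxy.le] at hx'
    rw [uIcc_of_le hxy.le] at heq
    have hx'' : x + y - x' ∈ Icc y x := by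
      obtain ⟨h1, h2⟩ := hx'
      exact ⟨by linarith, by linarith⟩
    have hgx : (fun w => f (x + y - w)) x = f y := by norm_num
    have t0 : iteratedDerivWithin 0 (fun w => f (x + y - w)) (Icc y x) y = f x := by
      have := hrefl 0 (by norm_num) y (left_mem_Icc.2 hxy.le)
      simpa using this
    have t1 : iteratedDerivWithin 1 (fun w => f (x + y - w)) (Icc y x) y
        = -derivWithin f (Icc 0 1) x := by
      have := hrefl 1 (by norm_num) y (left_mem_Icc.2 hxy.le)
      rw [this]
      have hxm : x + y - y ∈ Icc y x := by
        simpa using right_mem_Icc.2 hxy.le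
      rw [show x + y - y = x by ring]
      rw [iterDW_subset hsub hud01 hudyx (by norm_num) hf (right_mem_Icc.2 hxy.le)]
      rw [iteratedDerivWithin_one]
      ring
    have t2 : iteratedDerivWithin 2 (fun w => f (x + y - w)) (Icc y x) y
        = iteratedDerivWithin 2 f (Icc 0 1) x := by
      have := hrefl 2 (by norm_num) y (left_mem_Icc.2 hxy.le)
      rw [this, show x + y - y = x by ring]
      rw [iterDW_subset hsub hud01 hudyx (by norm_num) hf (right_mem_Icc.2 hxy.le)]
      norm_num
    have t3 : iteratedDerivWithin 3 (fun w => f (x + y - w)) (Icc y x) x'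
        = -iteratedDerivWithin 3 f (Icc 0 1) (x + y - x') := by
      have := hrefl 3 (by norm_num) x' (Ioo_subset_Icc_self hx')
      rw [this]
      rw [iterDW_subset hsub hud01 hudyx (by norm_num) hf hx'']
      ring
    rw [taylor_within_apply] at heq
    simp only [Finset.sum_range_succ, Finset.sum_range_zero, t0, t1, t2, t3, hgx] at heq
    norm_num [Nat.factorial] at heq
    have hb := hB (x + y - x') (hsub hx'')
    have hmain : f y - f x - derivWithin f (Icc 0 1) x * (y - x)
        - iteratedDerivWithin 2 f (Icc 0 1) x * (y - x) ^ 2 / 2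
        = -iteratedDerivWithin 3 f (Icc 0 1) (x + y - x') * (x - y) ^ 3 / 6 := by
      nlinarith [heq, sq_nonneg (x - y), sq_nonneg (y - x)]
    have habs : |y - x| = x - y := by
      rw [abs_of_neg (by linarith)]; ring
    rw [hmain, habs]
    rw [abs_div, abs_mul, abs_pow]
    rw [abs_of_pos (by linarith : (0:ℝ) < x - y), abs_of_pos (by norm_num : (0:ℝ) < 6),
      abs_neg]
    have h3 : (0:ℝ) ≤ (x - y) ^ 3 := pow_nonneg (by linarith) 3
    exact (div_le_div_iff_of_pos_right (by norm_num : (0:ℝ) < 6)).mpr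
      (mul_le_mul_of_nonneg_right hb h3)

end helpers

set_option maxHeartbeats 1000000 in
/-- Derivative estimation via the kernel derivative: for a continuously differentiable
symmetric probability density `𝒦` supported in `[-1,1]` with `𝒦(±1) = 0` and bounded
derivative, and `h` three times continuously differentiable on `[0,1]` with third derivative
bounded by `B₀`, for interior `s` and a bandwidth `a ≤ min{s, 1-s}`,
`|∫₀¹ a⁻² h(u) 𝒦'((s-u)/a) du − h'(s)| ≤ (B₀ a²/6) ∫_{-1}^1 |v|³ |𝒦'(v)| dv`. -/
theorem kernel_deriv_estimation (𝒦 : ℝ → ℝ)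
    (hK : ContDiff ℝ 1 𝒦)
    (hsymm : ∀ v, 𝒦 (-v) = 𝒦 v)
    (hnonneg : ∀ v, 0 ≤ 𝒦 v)
    (hsupp : ∀ v, v ∉ Set.Icc (-1 : ℝ) 1 → 𝒦 v = 0)
    (hone : ∫ v, 𝒦 v = 1)
    (hKneg1 : 𝒦 (-1) = 0) (hK1 : 𝒦 1 = 0)
    (hKdbd : ∃ M, ∀ v, |deriv 𝒦 v| ≤ M)
    (B₀ : ℝ) (h : ℝ → ℝ)
    (hh : ContDiffOn ℝ 3 h (Set.Icc 0 1))
    (hh3 : ∀ u ∈ Set.Icc (0 : ℝ) 1, |iteratedDerivWithin 3 h (Set.Icc 0 1) u| ≤ B₀)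
    (s : ℝ) (hs : s ∈ Set.Ioo (0 : ℝ) 1)
    (a : ℝ) (ha : 0 < a) (ha' : a ≤ min s (1 - s)) :
    |(∫ u in (0 : ℝ)..1, a⁻¹ ^ 2 * h u * deriv 𝒦 ((s - u) / a)) -
        derivWithin h (Set.Icc 0 1) s| ≤
      B₀ * a ^ 2 / 6 * ∫ v in (-1 : ℝ)..1, |v| ^ 3 * |deriv 𝒦 v| := by
  obtain ⟨hs0, hs1⟩ := hs
  have has : a ≤ s := le_trans ha' (min_le_left _ _)
  have ha1s : a ≤ 1 - s := le_trans ha' (min_le_right _ _)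
  have ha0 : a ≠ 0 := ne_of_gt ha
  set c : ℝ → ℝ := deriv 𝒦 with hc_def
  have hccont : Continuous c := hK.continuous_deriv le_rfl
  have hKcont : Continuous 𝒦 := hK.continuous
  have hKdiff : ∀ x : ℝ, DifferentiableAt ℝ 𝒦 x := fun x => (hK.differentiable one_ne_zero) x
  -- 𝒦 vanishes outside the open interval
  have hKz : ∀ w : ℝ, w ∉ Set.Ioo (-1:ℝ) 1 → 𝒦 w = 0 := by
    intro w hw
    by_cases hw' : w ∈ Set.Icc (-1:ℝ) 1
    · obtain ⟨h1, h2⟩ := hw'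
      rcases eq_or_lt_of_le h1 with he | h1'
      · rw [← he]; exact hKneg1
      rcases eq_or_lt_of_le h2 with he | h2'
      · rw [he]; exact hK1
      exact absurd ⟨h1', h2'⟩ hw
    · exact hsupp w hw'
  -- the derivative vanishes outside the open interval
  have hczero : ∀ v : ℝ, v ∉ Set.Ioo (-1:ℝ) 1 → c v = 0 := by
    intro v hv
    rcases lt_trichotomy v (-1) with hv1 | hv1 | hv1
    · have : 𝒦 =ᶠ[nhds v] (fun _ => (0:ℝ)) := by
        filter_upwards [Iio_mem_nhds hv1] with w hw
        exact hKz w (by simp at hw ⊢; intro h'; linarith)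
      rw [hc_def, this.deriv_eq, deriv_const]
    · subst hv1
      have h1 : derivWithin 𝒦 (Set.Iic (-1:ℝ)) (-1) = c (-1) :=
        (hKdiff _).derivWithin ((uniqueDiffOn_Iic (-1:ℝ)) _ (by simp))
      rw [← h1]
      have h2 : Set.EqOn 𝒦 (fun _ => (0:ℝ)) (Set.Iic (-1:ℝ)) := by
        intro w hw
        exact hKz w (by simp at hw ⊢; intro h'; linarith)
      rw [derivWithin_congr h2 (by simpa using hKneg1), derivWithin_fun_const, Pi.zero_apply]
    · rcases lt_trichotomy v 1 with hv2 | hv2 | hv2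
      · exact absurd ⟨hv1, hv2⟩ hv
      · subst hv2
        have h1 : derivWithin 𝒦 (Set.Ici (1:ℝ)) 1 = c 1 :=
          (hKdiff _).derivWithin ((uniqueDiffOn_Ici (1:ℝ)) _ (by simp))
        rw [← h1]
        have h2 : Set.EqOn 𝒦 (fun _ => (0:ℝ)) (Set.Ici (1:ℝ)) := by
          intro w hw
          exact hKz w (by simp at hw ⊢; intro h'; linarith)
        rw [derivWithin_congr h2 (by simpa using hK1), derivWithin_fun_const, Pi.zero_apply]
      · have : 𝒦 =ᶠ[nhds v] (fun _ => (0:ℝ)) := by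
          filter_upwards [Ioi_mem_nhds hv2] with w hw
          exact hKz w (by simp at hw ⊢; intro h'; linarith)
        rw [hc_def, this.deriv_eq, deriv_const]
  -- ∫ 𝒦 over [-1,1] is 1
  have hKint : ∫ v in (-1:ℝ)..1, 𝒦 v = 1 := by
    rw [intervalIntegral.integral_of_le (by norm_num : (-1:ℝ) ≤ 1)]
    rw [setIntegral_eq_integral_of_forall_compl_eq_zero (fun x hx => hKz x (fun hx' => hx (Set.Ioo_subset_Ioc_self hx')))]
    exact hone
  -- I0
  have hI0 : ∫ v in (-1:ℝ)..1, c v = 0 := by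
    rw [hc_def, intervalIntegral.integral_deriv_eq_sub (fun x _ => hKdiff x)
      (hccont.intervalIntegrable _ _), hK1, hKneg1, sub_zero]
  -- odd integral
  have hodd : ∫ v in (-1:ℝ)..1, v * 𝒦 v = 0 := by
    have h1 := intervalIntegral.integral_comp_neg (a := (-1:ℝ)) (b := 1) (fun w => w * 𝒦 w)
    simp only [neg_neg] at h1
    have h2 : ∀ x : ℝ, -x * 𝒦 (-x) = -(x * 𝒦 x) := fun x => by rw [hsymm]; ring
    simp only [h2] at h1
    rw [intervalIntegral.integral_neg] at h1
    linarith
  -- I1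
  have hI1 : ∫ v in (-1:ℝ)..1, v * c v = -1 := by
    have := intervalIntegral.integral_mul_deriv_eq_deriv_mul (a := (-1:ℝ)) (b := (1:ℝ))
      (u := fun v : ℝ => v) (u' := fun _ => (1:ℝ)) (v := 𝒦) (v' := c)
      (fun x _ => hasDerivAt_id x) (fun x _ => (hKdiff x).hasDerivAt)
      intervalIntegrable_const (hccont.intervalIntegrable _ _)
    simp only [hK1, hKneg1, one_mul, mul_zero] at this
    rw [this, hKint]
    ring
  -- I2
  have hI2 : ∫ v in (-1:ℝ)..1, v^2 * c v = 0 := by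
    have hu : ∀ x ∈ Set.uIcc (-1:ℝ) 1, HasDerivAt (fun v : ℝ => v^2) (2*x) x := by
      intro x _
      simpa using hasDerivAt_pow 2 x
    have := intervalIntegral.integral_mul_deriv_eq_deriv_mul (a := (-1:ℝ)) (b := (1:ℝ))
      (u := fun v : ℝ => v^2) (u' := fun x => 2*x) (v := 𝒦) (v' := c)
      hu (fun x _ => (hKdiff x).hasDerivAt)
      (by apply Continuous.intervalIntegrable; continuity) (hccont.intervalIntegrable _ _)
    simp only [hK1, hKneg1, mul_zero] at this
    rw [this]
    have h3 : ∫ x in (-1:ℝ)..1, 2 * x * 𝒦 x = 2 * ∫ x in (-1:ℝ)..1, x * 𝒦 x := by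
      rw [← intervalIntegral.integral_const_mul]
      congr 1; ext x; ring
    rw [h3, hodd]
    ring
  -- notation for the Taylor data
  set d1 : ℝ := derivWithin h (Set.Icc 0 1) s with hd1
  set d2 : ℝ := iteratedDerivWithin 2 h (Set.Icc 0 1) s with hd2
  set G : ℝ → ℝ := fun v => a⁻¹ ^ 2 * h (s - a * v) * c v with hG
  -- step A : substitution
  have stepA : (∫ u in (0 : ℝ)..1, a⁻¹ ^ 2 * h u * c ((s - u) / a))
      = a * ∫ v in ((s-1)/a)..(s/a), G v := by
    have e1 : Set.EqOn (fun u : ℝ => a⁻¹ ^ 2 * h u * c ((s - u) / a))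
        (fun u : ℝ => G ((s - u) / a)) (Set.uIcc 0 1) := by
      intro u _
      simp only [hG]
      rw [show s - a * ((s - u) / a) = u by field_simp; ring]
    rw [intervalIntegral.integral_congr e1]
    have e2 : (∫ u in (0:ℝ)..1, G ((s - u)/a))
        = ∫ w in (s - 1)..(s - 0), (fun w => G (w / a)) w :=
      intervalIntegral.integral_comp_sub_left (fun w => G (w / a)) s
    rw [e2]
    rw [sub_zero]
    rw [intervalIntegral.integral_comp_div (f := G) ha0]
    rw [smul_eq_mul]
  -- bounds facts
  have hle1 : (s - 1) / a ≤ -1 := by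
    rw [div_le_iff₀ ha]; linarith
  have hle2 : (1 : ℝ) ≤ s / a := by
    rw [le_div_iff₀ ha]; linarith
  -- continuity of G on the big interval
  have hmapsG : ∀ v ∈ Set.Icc ((s-1)/a) (s/a), s - a * v ∈ Set.Icc (0:ℝ) 1 := by
    rintro v ⟨hv1, hv2⟩
    have h1 : s - 1 ≤ v * a := (div_le_iff₀ ha).mp hv1
    have h2 : v * a ≤ s := (le_div_iff₀ ha).mp hv2
    constructor <;> nlinarith
  have hcontG : ContinuousOn G (Set.Icc ((s-1)/a) (s/a)) := by
    apply ContinuousOn.mul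
    apply ContinuousOn.mul continuousOn_const
    · exact hh.continuousOn.comp (by fun_prop) hmapsG
    · exact hccont.continuousOn
  have hsubI : ∀ p q : ℝ, (s-1)/a ≤ p → p ≤ q → q ≤ s/a →
      IntervalIntegrable G volume p q := by
    intro p q h1 h2 h3
    apply ContinuousOn.intervalIntegrable
    apply hcontG.mono
    rw [Set.uIcc_of_le h2]
    exact Set.Icc_subset_Icc h1 h3
  have hGzero : ∀ v : ℝ, v ∉ Set.Ioo (-1:ℝ) 1 → G v = 0 := by
    intro v hv; simp [hG, hczero v hv]
  -- step B : restrict to [-1,1]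
  have stepB : (∫ v in ((s-1)/a)..(s/a), G v) = ∫ v in (-1:ℝ)..1, G v := by
    have hz1 : (∫ v in ((s-1)/a)..(-1:ℝ), G v) = 0 := by
      have heq0 : Set.EqOn G (fun _ => (0:ℝ)) (Set.uIcc ((s-1)/a) (-1)) := by
        intro w hw
        rw [Set.uIcc_of_le hle1] at hw
        exact hGzero w (fun hmem => absurd hw.2 (not_le.mpr hmem.1))
      rw [intervalIntegral.integral_congr heq0, intervalIntegral.integral_const, smul_zero]
    have hz2 : (∫ v in (1:ℝ)..(s/a), G v) = 0 := by
      have heq0 : Set.EqOn G (fun _ => (0:ℝ)) (Set.uIcc 1 (s/a)) := by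
        intro w hw
        rw [Set.uIcc_of_le hle2] at hw
        exact hGzero w (fun hmem => absurd hw.1 (not_le.mpr hmem.2))
      rw [intervalIntegral.integral_congr heq0, intervalIntegral.integral_const, smul_zero]
    have hi1 := hsubI ((s-1)/a) (-1) le_rfl hle1 (by linarith)
    have hi2 := hsubI (-1) 1 hle1 (by norm_num) hle2
    have hi3 := hsubI 1 (s/a) (by linarith) hle2 le_rfl
    rw [← intervalIntegral.integral_add_adjacent_intervals hi1 (hi2.trans hi3),
      ← intervalIntegral.integral_add_adjacent_intervals hi2 hi3, hz1, hz2]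
    ring
  -- the Taylor remainder
  set R : ℝ → ℝ := fun v => h (s - a * v) - h s - d1 * (s - a * v - s)
    - d2 * (s - a * v - s) ^ 2 / 2 with hR
  have hs01 : s ∈ Set.Icc (0:ℝ) 1 := ⟨hs0.le, hs1.le⟩
  have hmem1 : ∀ v ∈ Set.uIcc (-1:ℝ) 1, s - a * v ∈ Set.Icc (0:ℝ) 1 := by
    intro v hv
    rw [Set.uIcc_of_le (by norm_num : (-1:ℝ) ≤ 1)] at hv
    exact hmapsG v (Set.Icc_subset_Icc hle1 hle2 hv)
  have hRbound : ∀ v ∈ Set.Icc (-1:ℝ) 1, |R v| ≤ B₀ * a ^ 3 / 6 * |v| ^ 3 := by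
    intro v hv
    have hmem := hmem1 v (by rwa [Set.uIcc_of_le (by norm_num : (-1:ℝ) ≤ 1)])
    have hb := taylor3_bound hh hh3 hs01 hmem
    simp only [hR]
    rw [← hd1, ← hd2] at hb
    have habs : |s - a * v - s| = a * |v| := by
      rw [show s - a * v - s = -(a * v) by ring, abs_neg, abs_mul, abs_of_pos ha]
    calc |h (s - a * v) - h s - d1 * (s - a * v - s)
          - d2 * (s - a * v - s) ^ 2 / 2|
        ≤ B₀ * |s - a * v - s| ^ 3 / 6 := hb
      _ = B₀ * a ^ 3 / 6 * |v| ^ 3 := by rw [habs]; ring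
  -- decomposition of G
  have hGeq : Set.EqOn G (fun v => a⁻¹ ^ 2 * h s * c v + a⁻¹ ^ 2 * (-a) * d1 * (v * c v)
      + a⁻¹ ^ 2 * a ^ 2 / 2 * d2 * (v ^ 2 * c v) + a⁻¹ ^ 2 * (R v * c v))
      (Set.uIcc (-1:ℝ) 1) := by
    intro v _
    simp only [hG, hR]
    ring
  have hhcomp : ContinuousOn (fun v => h (s - a * v)) (Set.uIcc (-1:ℝ) 1) :=
    hh.continuousOn.comp (by fun_prop) hmem1
  have hRcont : ContinuousOn R (Set.uIcc (-1:ℝ) 1) := by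
    simp only [hR]
    exact ((hhcomp.sub continuousOn_const).sub (by fun_prop)).sub (by fun_prop)
  have hintRc : IntervalIntegrable (fun v => R v * c v) volume (-1) 1 :=
    (hRcont.mul hccont.continuousOn).intervalIntegrable
  set J : ℝ := ∫ v in (-1:ℝ)..1, R v * c v with hJ
  have stepC : (∫ v in (-1:ℝ)..1, G v) = a⁻¹ ^ 2 * a * d1 + a⁻¹ ^ 2 * J := by
    rw [intervalIntegral.integral_congr hGeq]
    have i1 : IntervalIntegrable (fun v : ℝ => a⁻¹ ^ 2 * h s * c v) volume (-1) 1 :=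
      (hccont.intervalIntegrable _ _).const_mul _
    have i2 : IntervalIntegrable (fun v : ℝ => a⁻¹ ^ 2 * (-a) * d1 * (v * c v)) volume (-1) 1 :=
      ((continuous_id.mul hccont).intervalIntegrable _ _).const_mul _
    have i3 : IntervalIntegrable (fun v : ℝ => a⁻¹ ^ 2 * a ^ 2 / 2 * d2 * (v ^ 2 * c v))
        volume (-1) 1 :=
      (((continuous_pow 2).mul hccont).intervalIntegrable _ _).const_mul _
    have i4 : IntervalIntegrable (fun v : ℝ => a⁻¹ ^ 2 * (R v * c v)) volume (-1) 1 :=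
      hintRc.const_mul _
    rw [intervalIntegral.integral_add ((i1.add i2).add i3) i4,
      intervalIntegral.integral_add (i1.add i2) i3,
      intervalIntegral.integral_add i1 i2,
      intervalIntegral.integral_const_mul, intervalIntegral.integral_const_mul,
      intervalIntegral.integral_const_mul, intervalIntegral.integral_const_mul,
      hI0, hI1, hI2]
    ring
  -- put it together
  rw [stepA, stepB, stepC]
  have hmi : a * a⁻¹ = 1 := mul_inv_cancel₀ ha0
  have hkey : a * (a⁻¹ ^ 2 * a * d1 + a⁻¹ ^ 2 * J) - d1 = a⁻¹ * J := by
    linear_combination ((a * a⁻¹ + 1) * d1 + a⁻¹ * J) * hmi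
  rw [hkey, abs_mul, abs_of_pos (inv_pos.mpr ha)]
  have habsJ : |J| ≤ B₀ * a ^ 3 / 6 * ∫ v in (-1:ℝ)..1, |v| ^ 3 * |c v| := by
    have h1 : |J| ≤ ∫ v in (-1:ℝ)..1, |R v * c v| := by
      rw [hJ]
      exact intervalIntegral.abs_integral_le_integral_abs (by norm_num)
    have h2 : (∫ v in (-1:ℝ)..1, |R v * c v|)
        ≤ ∫ v in (-1:ℝ)..1, B₀ * a ^ 3 / 6 * (|v| ^ 3 * |c v|) := by
      apply intervalIntegral.integral_mono_on (by norm_num)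
      · exact ((hRcont.mul hccont.continuousOn).abs).intervalIntegrable
      · exact ((continuous_const.mul ((continuous_abs.pow 3).mul
          hccont.abs)).intervalIntegrable _ _)
      · intro v hv
        rw [abs_mul]
        calc |R v| * |c v| ≤ (B₀ * a ^ 3 / 6 * |v| ^ 3) * |c v| :=
              mul_le_mul_of_nonneg_right (hRbound v hv) (abs_nonneg _)
          _ = B₀ * a ^ 3 / 6 * (|v| ^ 3 * |c v|) := by ring
    have h3 : (∫ v in (-1:ℝ)..1, B₀ * a ^ 3 / 6 * (|v| ^ 3 * |c v|))
        = B₀ * a ^ 3 / 6 * ∫ v in (-1:ℝ)..1, |v| ^ 3 * |c v| := by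
      rw [intervalIntegral.integral_const_mul]
    linarith
  calc a⁻¹ * |J| ≤ a⁻¹ * (B₀ * a ^ 3 / 6 * ∫ v in (-1:ℝ)..1, |v| ^ 3 * |c v|) :=
        mul_le_mul_of_nonneg_left habsJ (inv_nonneg.mpr ha.le)
    _ = B₀ * a ^ 2 / 6 * ∫ v in (-1:ℝ)..1, |v| ^ 3 * |c v| := by
        linear_combination (B₀ * a ^ 2 / 6 * ∫ v in (-1:ℝ)..1, |v| ^ 3 * |c v|) * hmi
end

section
/- Stability of normalization in L²: Let D ⊂ ℝ^p be measurable with Lebesgue measure 0 < |D| < ∞, and let a > 0, M > 0. Let f, g : D → ℝ be measurable with |f(z)| ≤ M for all z ∈ D, ∫_D f ≥ a, ∫_D g ≥ a/2, and g ∈ L²(D). Then ‖ g/∫_D g − f/∫_D f ‖_{L²(D)} ≤ (2/a + 2M|D|/a²) ‖ g − f ‖_{L²(D)}. -/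
open MeasureTheory
open scoped ENNReal NNReal

lemma sqrt_integral_sq_eq {α : Type*} [MeasurableSpace α] {μ : Measure α} {u : α → ℝ}
    (hu : MemLp u 2 μ) :
    Real.sqrt (∫ a, (u a) ^ 2 ∂μ) = (eLpNorm u 2 μ).toReal := by
  rw [hu.eLpNorm_eq_integral_rpow_norm two_ne_zero ENNReal.ofNat_ne_top,
    ENNReal.toReal_ofReal (Real.rpow_nonneg
      (integral_nonneg fun a => Real.rpow_nonneg (norm_nonneg _) _) _)]
  have h : (∫ a, ‖u a‖ ^ ((2 : ℝ≥0∞)).toReal ∂μ) = ∫ a, (u a) ^ 2 ∂μ := by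
    refine integral_congr_ae (Filter.Eventually.of_forall fun a => ?_)
    show ‖u a‖ ^ ((2 : ℝ≥0∞)).toReal = u a ^ 2
    rw [ENNReal.toReal_ofNat, show ((2 : ℝ)) = ((2 : ℕ) : ℝ) by norm_num,
      Real.rpow_natCast]
    simp [Real.norm_eq_abs, sq_abs]
  rw [h, Real.sqrt_eq_rpow, ENNReal.toReal_ofNat]
  norm_num

lemma sqrt_integral_sq_add_le {α : Type*} [MeasurableSpace α] {μ : Measure α} {u v : α → ℝ}
    (hu : MemLp u 2 μ) (hv : MemLp v 2 μ) :
    Real.sqrt (∫ a, (u a + v a) ^ 2 ∂μ) ≤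
      Real.sqrt (∫ a, (u a) ^ 2 ∂μ) + Real.sqrt (∫ a, (v a) ^ 2 ∂μ) := by
  calc Real.sqrt (∫ a, (u a + v a) ^ 2 ∂μ) = (eLpNorm (u + v) 2 μ).toReal :=
        sqrt_integral_sq_eq (hu.add hv)
    _ ≤ (eLpNorm u 2 μ + eLpNorm v 2 μ).toReal := by
        refine ENNReal.toReal_mono (ENNReal.add_ne_top.2 ⟨hu.eLpNorm_ne_top, hv.eLpNorm_ne_top⟩) ?_
        exact eLpNorm_add_le hu.1 hv.1 one_le_two
    _ = (eLpNorm u 2 μ).toReal + (eLpNorm v 2 μ).toReal :=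
        ENNReal.toReal_add hu.eLpNorm_ne_top hv.eLpNorm_ne_top
    _ = _ := by rw [sqrt_integral_sq_eq hu, sqrt_integral_sq_eq hv]

lemma abs_integral_le_sqrt_mul_sqrt {α : Type*} [MeasurableSpace α] {μ : Measure α}
    [IsFiniteMeasure μ] {u : α → ℝ} (hu : MemLp u 2 μ) :
    |∫ a, u a ∂μ| ≤ Real.sqrt ((μ Set.univ).toReal) * Real.sqrt (∫ a, (u a) ^ 2 ∂μ) := by
  have h2 : (ENNReal.ofReal 2) = (2 : ℝ≥0∞) := by
    rw [ENNReal.ofReal_ofNat]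
  have hone : MemLp (fun _ : α => (1 : ℝ)) (ENNReal.ofReal 2) μ := by
    rw [h2]; exact memLp_const 1
  have hu' : MemLp u (ENNReal.ofReal 2) μ := by rw [h2]; exact hu
  have hconj : Real.HolderConjugate 2 2 := Real.HolderConjugate.two_two
  have h := integral_mul_norm_le_Lp_mul_Lq (μ := μ) (f := u) (g := fun _ => (1 : ℝ))
    hconj hu' hone
  simp only [norm_one, mul_one, Real.norm_eq_abs, Real.one_rpow] at h
  have habs : |∫ a, u a ∂μ| ≤ ∫ a, |u a| ∂μ := by
    simpa [Real.norm_eq_abs] using norm_integral_le_integral_norm (μ := μ) u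
  have hsq : (∫ a, |u a| ^ (2 : ℝ) ∂μ) = ∫ a, (u a) ^ 2 ∂μ := by
    refine integral_congr_ae (Filter.Eventually.of_forall fun a => ?_)
    show |u a| ^ (2 : ℝ) = u a ^ 2
    rw [show ((2 : ℝ)) = ((2 : ℕ) : ℝ) by norm_num, Real.rpow_natCast, sq_abs]
  rw [hsq] at h
  have hconst : (∫ _ : α, (1 : ℝ) ∂μ) = (μ Set.univ).toReal := by simp [Measure.real]
  rw [hconst] at h
  calc |∫ a, u a ∂μ| ≤ ∫ a, |u a| ∂μ := habs
    _ ≤ (∫ a, (u a) ^ 2 ∂μ) ^ (1 / (2 : ℝ)) * ((μ Set.univ).toReal) ^ (1 / (2 : ℝ)) := h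
    _ = Real.sqrt ((μ Set.univ).toReal) * Real.sqrt (∫ a, (u a) ^ 2 ∂μ) := by
        rw [Real.sqrt_eq_rpow, Real.sqrt_eq_rpow, mul_comm]

/-- Stability of normalization in L²: if `|f| ≤ M` on `D`, `∫_D f ≥ a`, `∫_D g ≥ a/2` and
`g ∈ L²(D)`, then the renormalizations to total integral one satisfy
`‖g/∫_D g − f/∫_D f‖_{L²(D)} ≤ (2/a + 2M|D|/a²) ‖g − f‖_{L²(D)}`. -/
theorem normalization_stability_L2 (p : ℕ)
    (D : Set (EuclideanSpace ℝ (Fin p))) (hDmeas : MeasurableSet D)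
    (hD0 : 0 < volume D) (hDfin : volume D < ⊤)
    (a M : ℝ) (ha : 0 < a) (hM : 0 < M)
    (f g : EuclideanSpace ℝ (Fin p) → ℝ)
    (hfmeas : Measurable f) (hgmeas : Measurable g)
    (hfM : ∀ z ∈ D, |f z| ≤ M)
    (hfa : a ≤ ∫ z in D, f z)
    (hga : a / 2 ≤ ∫ z in D, g z)
    (hg2 : MemLp g 2 (volume.restrict D)) :
    Real.sqrt (∫ z in D, (g z / (∫ w in D, g w) - f z / (∫ w in D, f w)) ^ 2) ≤
      (2 / a + 2 * M * (volume D).toReal / a ^ 2) *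
        Real.sqrt (∫ z in D, (g z - f z) ^ 2) := by
  haveI : IsFiniteMeasure (volume.restrict D) :=
    ⟨by rwa [Measure.restrict_apply_univ]⟩
  set If := ∫ w in D, f w with hIfdef
  set Ig := ∫ w in D, g w with hIgdef
  set V := (volume D).toReal with hVdef
  have hV0 : 0 ≤ V := ENNReal.toReal_nonneg
  have hsV : Real.sqrt V * Real.sqrt V = V := Real.mul_self_sqrt hV0
  have hIf : 0 < If := lt_of_lt_of_le ha hfa
  have hIg : 0 < Ig := lt_of_lt_of_le (by positivity) hga
  -- f is in L²(D)
  have hf2 : MemLp f 2 (volume.restrict D) := by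
    refine MemLp.of_bound hfmeas.aestronglyMeasurable M ?_
    refine (ae_restrict_iff' hDmeas).2 (Filter.Eventually.of_forall fun z hz => ?_)
    simpa [Real.norm_eq_abs] using hfM z hz
  have hgf2 : MemLp (fun z => g z - f z) 2 (volume.restrict D) := hg2.sub hf2
  set N := Real.sqrt (∫ z in D, (g z - f z) ^ 2) with hNdef
  have hN0 : 0 ≤ N := Real.sqrt_nonneg _
  set c := (If - Ig) / (Ig * If) with hcdef
  -- decomposition
  have hdecomp : ∀ z, g z / Ig - f z / If = (g z - f z) / Ig + f z * c := by
    intro z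
    rw [hcdef]
    field_simp
    ring
  -- MemLp of the two pieces
  have hu2 : MemLp (fun z => (g z - f z) / Ig) 2 (volume.restrict D) := by
    simpa [div_eq_mul_inv, mul_comm] using hgf2.const_mul Ig⁻¹
  have hv2 : MemLp (fun z => f z * c) 2 (volume.restrict D) := by
    simpa [mul_comm] using hf2.const_mul c
  -- the first piece
  have hA : Real.sqrt (∫ z in D, ((g z - f z) / Ig) ^ 2) = N / Ig := by
    have : (∫ z in D, ((g z - f z) / Ig) ^ 2) = (∫ z in D, (g z - f z) ^ 2) / Ig ^ 2 := by
      rw [← integral_div]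
      exact integral_congr_ae (Filter.Eventually.of_forall fun z => by simp [div_pow])
    rw [this, Real.sqrt_div (integral_nonneg fun z => sq_nonneg _),
      Real.sqrt_sq hIg.le]
  -- bound on ∫ f²
  have hfsq_le : (∫ z in D, f z ^ 2) ≤ M ^ 2 * V := by
    have h1 : (∫ z in D, f z ^ 2) ≤ ∫ _ in D, M ^ 2 := by
      refine setIntegral_mono_on hf2.integrable_sq
        (integrableOn_const hDfin.ne) hDmeas fun z hz => ?_
      have := hfM z hz
      nlinarith [abs_nonneg (f z), sq_abs (f z)]
    have h2 : (∫ _ in D, M ^ 2 : ℝ) = M ^ 2 * V := by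
      rw [setIntegral_const, smul_eq_mul, mul_comm, Measure.real]
    linarith
  -- the second piece
  have hB : Real.sqrt (∫ z in D, (f z * c) ^ 2) ≤ M * |c| * Real.sqrt V := by
    have h1 : (∫ z in D, (f z * c) ^ 2) ≤ (M * |c|) ^ 2 * V := by
      have : (∫ z in D, (f z * c) ^ 2) = (∫ z in D, f z ^ 2) * c ^ 2 := by
        rw [← integral_mul_const]
        exact integral_congr_ae (Filter.Eventually.of_forall fun z => by ring)
      rw [this]
      have h3 : (∫ z in D, f z ^ 2) * c ^ 2 ≤ M ^ 2 * V * c ^ 2 :=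
        mul_le_mul_of_nonneg_right hfsq_le (sq_nonneg c)
      have h4 : (M * |c|) ^ 2 * V = M ^ 2 * V * c ^ 2 := by
        rw [mul_pow, sq_abs]; ring
      linarith
    calc Real.sqrt (∫ z in D, (f z * c) ^ 2) ≤ Real.sqrt ((M * |c|) ^ 2 * V) :=
          Real.sqrt_le_sqrt h1
      _ = M * |c| * Real.sqrt V := by
          rw [Real.sqrt_mul (sq_nonneg _), Real.sqrt_sq (by positivity)]
  -- Cauchy–Schwarz bound on |If - Ig|
  have hCS : |If - Ig| ≤ Real.sqrt V * N := by
    have hint_f : Integrable f (volume.restrict D) := hf2.integrable one_le_two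
    have hint_g : Integrable g (volume.restrict D) := hg2.integrable one_le_two
    have h1 : If - Ig = -(∫ z in D, (g z - f z)) := by
      rw [integral_sub hint_g hint_f]; ring
    have h2 := abs_integral_le_sqrt_mul_sqrt (μ := volume.restrict D) hgf2
    rw [Measure.restrict_apply_univ] at h2
    rw [h1, abs_neg]
    exact h2
  -- bound on |c|
  have hc_le : |c| ≤ Real.sqrt V * N / (Ig * If) := by
    rw [hcdef, abs_div, abs_of_pos (by positivity : (0:ℝ) < Ig * If)]
    gcongr
  -- assemble
  calc Real.sqrt (∫ z in D, (g z / Ig - f z / If) ^ 2)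
      = Real.sqrt (∫ z in D, ((g z - f z) / Ig + f z * c) ^ 2) := by
        simp only [hdecomp]
    _ ≤ Real.sqrt (∫ z in D, ((g z - f z) / Ig) ^ 2) +
        Real.sqrt (∫ z in D, (f z * c) ^ 2) := sqrt_integral_sq_add_le hu2 hv2
    _ ≤ N / Ig + M * |c| * Real.sqrt V := by rw [hA]; exact add_le_add_right hB _
    _ ≤ N / Ig + M * (Real.sqrt V * N / (Ig * If)) * Real.sqrt V := by
        have : M * |c| * Real.sqrt V ≤ M * (Real.sqrt V * N / (Ig * If)) * Real.sqrt V := by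
          have := mul_le_mul_of_nonneg_left hc_le hM.le
          exact mul_le_mul_of_nonneg_right this (Real.sqrt_nonneg V)
        linarith
    _ = N / Ig + M * V * N / (Ig * If) := by
        rw [show M * (Real.sqrt V * N / (Ig * If)) * Real.sqrt V =
          M * (Real.sqrt V * Real.sqrt V) * N / (Ig * If) by ring, hsV]
    _ ≤ N * (2 / a) + N * (2 * M * V / a ^ 2) := by
        have h1 : N / Ig ≤ N * (2 / a) := by
          rw [div_eq_mul_one_div N Ig]
          refine mul_le_mul_of_nonneg_left ?_ hN0
          rw [show (2 : ℝ) / a = 1 / (a / 2) by field_simp]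
          exact one_div_le_one_div_of_le (by positivity) hga
        have h2 : M * V * N / (Ig * If) ≤ N * (2 * M * V / a ^ 2) := by
          have hlow : a ^ 2 / 2 ≤ Ig * If := by nlinarith
          have : M * V * N / (Ig * If) ≤ M * V * N / (a ^ 2 / 2) := by
            gcongr
          calc M * V * N / (Ig * If) ≤ M * V * N / (a ^ 2 / 2) := this
            _ = N * (2 * M * V / a ^ 2) := by field_simp
        linarith
    _ = (2 / a + 2 * M * V / a ^ 2) * N := by ring
end

section
/- L² comparison of distribution functions via quantile functions: Let M ≥ 1 and a < b. Let F₁, F₂ : [a, b] → [0, 1] be continuously differentiable, strictly increasing functions with F_i(a) = 0, F_i(b) = 1 and 1/M ≤ F_i′(u) ≤ M for all u ∈ [a, b] and i = 1, 2, and let Q_i : [0,1] → [a, b] denote the inverse function of F_i. Then ∫_a^b (F₁(u) − F₂(u))² du ≤ M³ ∫₀¹ (Q₁(s) − Q₂(s))² ds. -/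
open MeasureTheory

/-- L² comparison of distribution functions via quantile functions: for strictly increasing
`C¹` distribution functions `F₁, F₂` on `[a, b]` with densities bounded between `1/M` and
`M`, and inverse (quantile) functions `Q₁, Q₂`,
`∫_a^b (F₁ − F₂)² ≤ M³ ∫₀¹ (Q₁ − Q₂)²`. -/
theorem cdf_quantile_L2_comparison (M a b : ℝ) (hM : 1 ≤ M) (hab : a < b)
    (F₁ F₂ Q₁ Q₂ : ℝ → ℝ)
    (hF₁ : ContDiffOn ℝ 1 F₁ (Set.Icc a b))
    (hF₂ : ContDiffOn ℝ 1 F₂ (Set.Icc a b))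
    (hmono₁ : StrictMonoOn F₁ (Set.Icc a b))
    (hmono₂ : StrictMonoOn F₂ (Set.Icc a b))
    (hF₁a : F₁ a = 0) (hF₁b : F₁ b = 1)
    (hF₂a : F₂ a = 0) (hF₂b : F₂ b = 1)
    (hd₁ : ∀ u ∈ Set.Icc a b,
      1 / M ≤ derivWithin F₁ (Set.Icc a b) u ∧ derivWithin F₁ (Set.Icc a b) u ≤ M)
    (hd₂ : ∀ u ∈ Set.Icc a b,
      1 / M ≤ derivWithin F₂ (Set.Icc a b) u ∧ derivWithin F₂ (Set.Icc a b) u ≤ M)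
    (hQ₁ : ∀ s ∈ Set.Icc (0 : ℝ) 1, Q₁ s ∈ Set.Icc a b ∧ F₁ (Q₁ s) = s)
    (hQ₂ : ∀ s ∈ Set.Icc (0 : ℝ) 1, Q₂ s ∈ Set.Icc a b ∧ F₂ (Q₂ s) = s)
    (hQF₁ : ∀ u ∈ Set.Icc a b, Q₁ (F₁ u) = u)
    (hQF₂ : ∀ u ∈ Set.Icc a b, Q₂ (F₂ u) = u) :
    ∫ u in a..b, (F₁ u - F₂ u) ^ 2 ≤ M ^ 3 * ∫ s in (0 : ℝ)..1, (Q₁ s - Q₂ s) ^ 2 := by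
  have hM0 : (0 : ℝ) < M := lt_of_lt_of_le one_pos hM
  set I := Set.Icc a b with hI
  have hIint : interior I = Set.Ioo a b := interior_Icc
  have hderiv_eq₁ : ∀ x ∈ interior I, deriv F₁ x = derivWithin F₁ I x := by
    intro x hx
    rw [derivWithin_of_mem_nhds (mem_interior_iff_mem_nhds.1 hx)]
  have hderiv_eq₂ : ∀ x ∈ interior I, deriv F₂ x = derivWithin F₂ I x := by
    intro x hx
    rw [derivWithin_of_mem_nhds (mem_interior_iff_mem_nhds.1 hx)]
  have hdiff₁ : DifferentiableOn ℝ F₁ (interior I) :=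
    (hF₁.differentiableOn one_ne_zero).mono interior_subset
  have hdiff₂ : DifferentiableOn ℝ F₂ (interior I) :=
    (hF₂.differentiableOn one_ne_zero).mono interior_subset
  -- lower slope bound for F₁
  have hlow₁ : ∀ x ∈ I, ∀ y ∈ I, x ≤ y → (1 / M) * (y - x) ≤ F₁ y - F₁ x := by
    refine (convex_Icc a b).mul_sub_le_image_sub_of_le_deriv hF₁.continuousOn hdiff₁ ?_
    intro x hx
    rw [hderiv_eq₁ x hx]
    exact (hd₁ x (interior_subset hx)).1
  -- upper slope bound for F₂
  have hup₂ : ∀ x ∈ I, ∀ y ∈ I, x ≤ y → F₂ y - F₂ x ≤ M * (y - x) := by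
    refine (convex_Icc a b).image_sub_le_mul_sub_of_deriv_le hF₂.continuousOn hdiff₂ ?_
    intro x hx
    rw [hderiv_eq₂ x hx]
    exact (hd₂ x (interior_subset hx)).2
  -- F₂ is M-Lipschitz on I
  have hlip₂ : ∀ x ∈ I, ∀ y ∈ I, |F₂ x - F₂ y| ≤ M * |x - y| := by
    intro x hx y hy
    rcases le_total x y with h | h
    · rw [abs_sub_comm, abs_sub_comm x y, abs_of_nonneg (sub_nonneg.2 ((hmono₂.monotoneOn) hx hy h)),
        abs_of_nonneg (sub_nonneg.2 h)]
      exact hup₂ x hx y hy h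
    · rw [abs_of_nonneg (sub_nonneg.2 ((hmono₂.monotoneOn) hy hx h)),
        abs_of_nonneg (sub_nonneg.2 h)]
      exact hup₂ y hy x hx h
  -- Q₁ and Q₂ are M-Lipschitz on [0,1]
  have hQmono : ∀ (Q F : ℝ → ℝ), (∀ s ∈ Set.Icc (0:ℝ) 1, Q s ∈ I ∧ F (Q s) = s) →
      StrictMonoOn F I →
      (∀ x ∈ I, ∀ y ∈ I, x ≤ y → (1 / M) * (y - x) ≤ F y - F x) →
      ∀ s ∈ Set.Icc (0:ℝ) 1, ∀ t ∈ Set.Icc (0:ℝ) 1, |Q s - Q t| ≤ M * |s - t| := by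
    intro Q F hQ hmono hlow s hs t ht
    have key : ∀ s ∈ Set.Icc (0:ℝ) 1, ∀ t ∈ Set.Icc (0:ℝ) 1, Q s ≤ Q t →
        Q t - Q s ≤ M * (t - s) := by
      intro s hs t ht hle
      have h1 := hlow (Q s) (hQ s hs).1 (Q t) (hQ t ht).1 hle
      rw [(hQ s hs).2, (hQ t ht).2] at h1
      rw [div_mul_eq_mul_div, one_mul, div_le_iff₀ hM0] at h1
      calc Q t - Q s ≤ (t - s) * M := h1
        _ = M * (t - s) := mul_comm _ _
    rcases le_total (Q s) (Q t) with h | h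
    · have hts : s ≤ t := by
        have := hmono.monotoneOn (hQ s hs).1 (hQ t ht).1 h
        rwa [(hQ s hs).2, (hQ t ht).2] at this
      rw [abs_sub_comm, abs_of_nonneg (sub_nonneg.2 h), abs_sub_comm,
        abs_of_nonneg (sub_nonneg.2 hts)]
      exact key s hs t ht h
    · have hts : t ≤ s := by
        have := hmono.monotoneOn (hQ t ht).1 (hQ s hs).1 h
        rwa [(hQ s hs).2, (hQ t ht).2] at this
      rw [abs_of_nonneg (sub_nonneg.2 h), abs_of_nonneg (sub_nonneg.2 hts)]
      exact key t ht s hs h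
  have hlow₂' : ∀ x ∈ I, ∀ y ∈ I, x ≤ y → (1 / M) * (y - x) ≤ F₂ y - F₂ x := by
    refine (convex_Icc a b).mul_sub_le_image_sub_of_le_deriv hF₂.continuousOn hdiff₂ ?_
    intro x hx
    rw [hderiv_eq₂ x hx]
    exact (hd₂ x (interior_subset hx)).1
  have hQ₁lip := hQmono Q₁ F₁ hQ₁ hmono₁ hlow₁
  have hQ₂lip := hQmono Q₂ F₂ hQ₂ hmono₂ hlow₂'
  -- continuity of Q₁, Q₂ on [0,1]
  have hQcont : ∀ (Q : ℝ → ℝ),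
      (∀ s ∈ Set.Icc (0:ℝ) 1, ∀ t ∈ Set.Icc (0:ℝ) 1, |Q s - Q t| ≤ M * |s - t|) →
      ContinuousOn Q (Set.Icc (0:ℝ) 1) := by
    intro Q hlip
    have : LipschitzOnWith (Real.toNNReal M) Q (Set.Icc (0:ℝ) 1) := by
      apply LipschitzOnWith.of_dist_le_mul
      intro x hx y hy
      rw [Real.dist_eq, Real.dist_eq, Real.coe_toNNReal M hM0.le]
      exact hlip x hx y hy
    exact this.continuousOn
  have hQ₁cont := hQcont Q₁ hQ₁lip
  have hQ₂cont := hQcont Q₂ hQ₂lip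
  -- define g
  set g : ℝ → ℝ := fun s => (Q₁ s - Q₂ s) ^ 2 with hg
  have hgcont : ContinuousOn g (Set.Icc (0:ℝ) 1) := ((hQ₁cont.sub hQ₂cont).pow 2)
  -- F₁ maps I into [0,1]
  have hmapsto : ∀ u ∈ I, F₁ u ∈ Set.Icc (0:ℝ) 1 := by
    intro u hu
    constructor
    · rw [← hF₁a]; exact hmono₁.monotoneOn (Set.left_mem_Icc.2 hab.le) hu hu.1
    · rw [← hF₁b]; exact hmono₁.monotoneOn hu (Set.right_mem_Icc.2 hab.le) hu.2
  -- pointwise bound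
  have hpoint : ∀ u ∈ I, (F₁ u - F₂ u) ^ 2 ≤
      M ^ 3 * (derivWithin F₁ I u * g (F₁ u)) := by
    intro u hu
    set s := F₁ u with hs
    have hs01 : s ∈ Set.Icc (0:ℝ) 1 := hmapsto u hu
    have hQ₁s : Q₁ s = u := hQF₁ u hu
    have heq : F₁ u - F₂ u = F₂ (Q₂ s) - F₂ (Q₁ s) := by
      rw [hQ₁s, (hQ₂ s hs01).2]
    have h1 : |F₁ u - F₂ u| ≤ M * |Q₂ s - Q₁ s| := by
      rw [heq]
      exact hlip₂ (Q₂ s) (hQ₂ s hs01).1 (Q₁ s) (hQ₁s ▸ hu)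
    have h2 : (F₁ u - F₂ u) ^ 2 ≤ M ^ 2 * g s := by
      have h1' : |F₁ u - F₂ u| ≤ M * |Q₁ s - Q₂ s| := by rwa [abs_sub_comm (Q₂ s)] at h1
      calc (F₁ u - F₂ u) ^ 2 = |F₁ u - F₂ u| ^ 2 := (sq_abs _).symm
        _ ≤ (M * |Q₁ s - Q₂ s|) ^ 2 := by
            apply pow_le_pow_left₀ (abs_nonneg _) h1'
        _ = M ^ 2 * |Q₁ s - Q₂ s| ^ 2 := by ring
        _ = M ^ 2 * g s := by rw [sq_abs]
    have h3 : (1:ℝ) ≤ M * derivWithin F₁ I u := by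
      have := (hd₁ u hu).1
      rw [div_le_iff₀ hM0] at this
      calc (1:ℝ) = 1 / M * M := by field_simp
        _ ≤ derivWithin F₁ I u * M := by
            apply mul_le_mul_of_nonneg_right (hd₁ u hu).1 hM0.le
        _ = M * derivWithin F₁ I u := mul_comm _ _
    have hgnn : 0 ≤ g s := sq_nonneg _
    calc (F₁ u - F₂ u) ^ 2 ≤ M ^ 2 * g s := h2
      _ = M ^ 2 * g s * 1 := (mul_one _).symm
      _ ≤ M ^ 2 * g s * (M * derivWithin F₁ I u) := by
          apply mul_le_mul_of_nonneg_left h3 (by positivity)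
      _ = M ^ 3 * (derivWithin F₁ I u * g s) := by ring
  -- integrability
  have hab' : a ≤ b := hab.le
  have huIcc : Set.uIcc a b = I := Set.uIcc_of_le hab'
  have hcont_d₁ : ContinuousOn (derivWithin F₁ I) I := by
    have := hF₁.continuousOn_derivWithin (uniqueDiffOn_Icc hab) le_rfl
    exact this
  have hgF : ContinuousOn (fun u => g (F₁ u)) I :=
    hgcont.comp hF₁.continuousOn (fun u hu => hmapsto u hu)
  have hint_lhs : IntervalIntegrable (fun u => (F₁ u - F₂ u) ^ 2) volume a b := by
    apply ContinuousOn.intervalIntegrable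
    rw [huIcc]
    exact (hF₁.continuousOn.sub hF₂.continuousOn).pow 2
  have hint_rhs : IntervalIntegrable
      (fun u => M ^ 3 * (derivWithin F₁ I u * g (F₁ u))) volume a b := by
    apply ContinuousOn.intervalIntegrable
    rw [huIcc]
    exact (continuousOn_const.mul (hcont_d₁.mul hgF))
  -- monotonicity of the integral
  have hstep1 : ∫ u in a..b, (F₁ u - F₂ u) ^ 2 ≤
      ∫ u in a..b, M ^ 3 * (derivWithin F₁ I u * g (F₁ u)) := by
    apply intervalIntegral.integral_mono_on hab' hint_lhs hint_rhs
    exact hpoint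
  -- substitution
  have hsub : ∫ u in a..b, derivWithin F₁ I u • (g ∘ F₁) u = ∫ s in F₁ a..F₁ b, g s := by
    apply intervalIntegral.integral_comp_smul_deriv''
    · rw [huIcc]; exact hF₁.continuousOn
    · intro x hx
      rw [min_eq_left hab', max_eq_right hab'] at hx
      have hxI : x ∈ I := Set.Ioo_subset_Icc_self hx
      have hd : HasDerivWithinAt F₁ (derivWithin F₁ I x) I x :=
        ((hF₁.differentiableOn one_ne_zero) x hxI).hasDerivWithinAt
      have : HasDerivAt F₁ (derivWithin F₁ I x) x := by
        apply hd.hasDerivAt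
        rw [hI]
        exact Icc_mem_nhds hx.1 hx.2
      exact this.hasDerivWithinAt
    · rw [huIcc]; exact hcont_d₁
    · rw [huIcc]
      exact hgcont.mono (Set.image_subset_iff.2 hmapsto)
  have hstep2 : ∫ u in a..b, M ^ 3 * (derivWithin F₁ I u * g (F₁ u)) =
      M ^ 3 * ∫ s in (0:ℝ)..1, g s := by
    rw [intervalIntegral.integral_const_mul]
    congr 1
    have : (fun u => derivWithin F₁ I u * g (F₁ u)) =
        fun u => derivWithin F₁ I u • (g ∘ F₁) u := by
      funext u; simp [Function.comp]
    rw [this, hsub, hF₁a, hF₁b]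
  calc ∫ u in a..b, (F₁ u - F₂ u) ^ 2
      ≤ ∫ u in a..b, M ^ 3 * (derivWithin F₁ I u * g (F₁ u)) := hstep1
    _ = M ^ 3 * ∫ s in (0:ℝ)..1, g s := hstep2
    _ = M ^ 3 * ∫ s in (0:ℝ)..1, (Q₁ s - Q₂ s) ^ 2 := rfl
end
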